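/- arXiv:2404.03941 — 7 statements merged into one kernel-verified Lean document; each statement's English description precedes it below -/
import Mathlib

section
/- Let Ω ⊆ ℝ^N be an open set and 0 < q < N/(N-1). Then limsup_{p→1^+} λ_{p,q}(Ω) ≤ λ_{1,q}(Ω). -/
open MeasureTheory Set Filter
open scoped ENNReal

noncomputable section

/-- `E` has smooth boundary: near each boundary point, `E` is the sublevel set of a smooth
function with non-vanishing differential. -/
def HasSmoothBoundary {N : ℕ} (E : Set (EuclideanSpace ℝ (Fin N))) : Prop :=
  ∀ x ∈ frontier E, ∃ U : Set (EuclideanSpace ℝ (Fin N)), IsOpen U ∧ x ∈ U ∧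
    ∃ f : EuclideanSpace ℝ (Fin N) → ℝ, ContDiff ℝ (⊤ : ℕ∞) f ∧
      (∀ y ∈ U, (y ∈ E ↔ f y < 0)) ∧ (∀ y ∈ U, fderiv ℝ f y ≠ 0)

/-- The ratio `H^{N-1}(∂E) / |E|^{1/q}`. -/
def cheegerRatio {N : ℕ} (q : ℝ) (E : Set (EuclideanSpace ℝ (Fin N))) : ℝ :=
  (MeasureTheory.Measure.hausdorffMeasure ((N : ℝ) - 1) (frontier E)).toReal /
    (volume E).toReal ^ (1 / q)

/-- The generalized Cheeger constant `h_q(Ω)`. -/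
def cheeger {N : ℕ} (q : ℝ) (Ω : Set (EuclideanSpace ℝ (Fin N))) : ℝ :=
  sInf { r : ℝ | ∃ E : Set (EuclideanSpace ℝ (Fin N)), IsOpen E ∧ E.Nonempty ∧
    IsCompact (closure E) ∧ closure E ⊆ Ω ∧ HasSmoothBoundary E ∧ r = cheegerRatio q E }

/-- The sharp Poincaré–Sobolev constant `λ_{p,q}(Ω)`. -/
def poincare {N : ℕ} (p q : ℝ) (Ω : Set (EuclideanSpace ℝ (Fin N))) : ℝ :=
  sInf { r : ℝ | ∃ u : EuclideanSpace ℝ (Fin N) → ℝ, ContDiff ℝ (⊤ : ℕ∞) u ∧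
    HasCompactSupport u ∧ tsupport u ⊆ Ω ∧
    (∫ x in Ω, |u x| ^ q) = 1 ∧ r = ∫ x in Ω, ‖fderiv ℝ u x‖ ^ p }

/-- The inradius of `Ω`, as an extended nonnegative real. -/
def einradius {N : ℕ} (Ω : Set (EuclideanSpace ℝ (Fin N))) : ℝ≥0∞ :=
  ⨆ x ∈ Ω, EMetric.infEdist x Ωᶜ

/-- The inradius of `Ω`, as a real number. -/
def inradius {N : ℕ} (Ω : Set (EuclideanSpace ℝ (Fin N))) : ℝ :=
  (einradius Ω).toReal

/-- The high ridge set of `Ω`. -/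
def highRidge {N : ℕ} (Ω : Set (EuclideanSpace ℝ (Fin N))) : Set (EuclideanSpace ℝ (Fin N)) :=
  {x ∈ Ω | Metric.ball x (inradius Ω) ⊆ Ω}

/-- The volume of the unit ball of `ℝ^N`. -/
def ballVol (N : ℕ) : ℝ :=
  (volume (Metric.ball (0 : EuclideanSpace ℝ (Fin N)) 1)).toReal

/-- `limsup_{p→1⁺} λ_{p,q}(Ω) ≤ λ_{1,q}(Ω)`. -/
theorem statement_2 (N : ℕ) (Ω : Set (EuclideanSpace ℝ (Fin N))) (hΩ : IsOpen Ω)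
    (q : ℝ) (hq : 0 < q) (hq' : q * ((N : ℝ) - 1) < N) :
    Filter.limsup (fun p : ℝ => poincare p q Ω) (nhdsWithin 1 (Set.Ioi 1))
      ≤ poincare 1 q Ω := by
  classical
  set l := nhdsWithin (1 : ℝ) (Set.Ioi 1) with hl
  have hlne : l.NeBot := nhdsGT_neBot 1
  -- the feasible set for exponent p
  set S : ℝ → Set ℝ := fun p =>
    { r : ℝ | ∃ u : EuclideanSpace ℝ (Fin N) → ℝ, ContDiff ℝ (⊤ : ℕ∞) u ∧
      HasCompactSupport u ∧ tsupport u ⊆ Ω ∧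
      (∫ x in Ω, |u x| ^ q) = 1 ∧ r = ∫ x in Ω, ‖fderiv ℝ u x‖ ^ p } with hS
  have hpo : ∀ p : ℝ, poincare p q Ω = sInf (S p) := fun p => rfl
  have hSnonneg : ∀ p : ℝ, ∀ r ∈ S p, (0 : ℝ) ≤ r := by
    rintro p r ⟨u, -, -, -, -, rfl⟩
    exact integral_nonneg fun x => Real.rpow_nonneg (norm_nonneg _) p
  have hSbdd : ∀ p : ℝ, BddBelow (S p) := fun p => ⟨0, fun r hr => hSnonneg p r hr⟩
  by_cases hne : ∃ u : EuclideanSpace ℝ (Fin N) → ℝ, ContDiff ℝ (⊤ : ℕ∞) u ∧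
      HasCompactSupport u ∧ tsupport u ⊆ Ω ∧ (∫ x in Ω, |u x| ^ q) = 1
  · -- nonempty case
    have hS1ne : (S 1).Nonempty := by
      obtain ⟨u, h1, h2, h3, h4⟩ := hne
      exact ⟨_, u, h1, h2, h3, h4, rfl⟩
    refine le_of_forall_pos_le_add fun ε hε => ?_
    have hε2 : 0 < ε / 2 := by linarith
    -- pick a near-optimal test function for p = 1
    obtain ⟨r, hrS, hrlt⟩ := Real.lt_sInf_add_pos hS1ne hε2
    obtain ⟨u, hu, hcs, hsupp, hnormed, hr⟩ := hrS
    set g : EuclideanSpace ℝ (Fin N) → ℝ := fun x => ‖fderiv ℝ u x‖ with hg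
    have hgcont : Continuous g := (hu.continuous_fderiv (by simp)).norm
    have hgcs : HasCompactSupport g := (hcs.fderiv ℝ).norm
    have hgnonneg : ∀ x, 0 ≤ g x := fun x => norm_nonneg _
    have hgint : Integrable g := hgcont.integrable_of_hasCompactSupport hgcs
    obtain ⟨x₀, hx₀⟩ := hgcont.exists_forall_ge_of_hasCompactSupport hgcs
    set C : ℝ := max (g x₀) 1 with hC
    have hC1 : (1 : ℝ) ≤ C := le_max_right _ _
    have hC0 : (0 : ℝ) < C := lt_of_lt_of_le one_pos hC1
    have hgC : ∀ x, g x ≤ C := fun x => le_trans (hx₀ x) (le_max_left _ _)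
    set I : ℝ := ∫ x in Ω, g x with hI
    have hI0 : 0 ≤ I := integral_nonneg fun x => hgnonneg x
    have hrI : r = I := by
      rw [hr]; simp [Real.rpow_one]; rfl
    -- C ^ (p - 1) * I tends to I
    have htend : Tendsto (fun p : ℝ => C ^ (p - 1) * I) l (nhds I) := by
      have h0 : Tendsto (fun p : ℝ => p - 1) l (nhds 0) := by
        have h0' : Tendsto (fun p : ℝ => p - 1) (nhds 1) (nhds (1 - 1)) :=
          (continuous_id.sub continuous_const).tendsto (1 : ℝ)
        rw [sub_self] at h0'
        exact h0'.mono_left nhdsWithin_le_nhds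
      have h1 : Tendsto (fun y : ℝ => C ^ y * I) (nhds 0) (nhds I) := by
        have hc : ContinuousAt (fun y : ℝ => C ^ y * I) 0 :=
          (Real.continuousAt_const_rpow (ne_of_gt hC0)).mul continuousAt_const
        have := hc.tendsto
        rwa [Real.rpow_zero, one_mul] at this
      exact h1.comp h0
    have hev1 : ∀ᶠ p in l, C ^ (p - 1) * I < I + ε / 2 :=
      htend.eventually_lt_const (by linarith)
    have hev2 : ∀ᶠ p in l, (1 : ℝ) < p := eventually_mem_nhdsWithin
    have hev : ∀ᶠ p in l, poincare p q Ω ≤ sInf (S 1) + ε := by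
      filter_upwards [hev1, hev2] with p hp1 hp2
      have hple : ∀ x, g x ^ p ≤ C ^ (p - 1) * g x := by
        intro x
        rcases eq_or_lt_of_le (hgnonneg x) with h0 | h0
        · rw [← h0, Real.zero_rpow (by linarith), mul_zero]
        · have : g x ^ p = g x ^ (p - 1) * g x := by
            have h := Real.rpow_add h0 (p - 1) 1
            rw [sub_add_cancel, Real.rpow_one] at h
            exact h
          rw [this]
          exact mul_le_mul_of_nonneg_right
            (Real.rpow_le_rpow (hgnonneg x) (hgC x) (by linarith)) (hgnonneg x)
      have hmem : (∫ x in Ω, ‖fderiv ℝ u x‖ ^ p) ∈ S p :=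
        ⟨u, hu, hcs, hsupp, hnormed, rfl⟩
      have h1 : poincare p q Ω ≤ ∫ x in Ω, g x ^ p := by
        rw [hpo p]; exact csInf_le (hSbdd p) hmem
      have h2 : (∫ x in Ω, g x ^ p) ≤ ∫ x in Ω, C ^ (p - 1) * g x := by
        refine integral_mono_of_nonneg
          (Filter.Eventually.of_forall fun x => Real.rpow_nonneg (hgnonneg x) p)
          ((hgint.restrict).const_mul _) (Filter.Eventually.of_forall hple)
      have h3 : (∫ x in Ω, C ^ (p - 1) * g x) = C ^ (p - 1) * I := by
        rw [hI, integral_const_mul]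
      have : poincare p q Ω < I + ε / 2 := by
        calc poincare p q Ω ≤ ∫ x in Ω, g x ^ p := h1
        _ ≤ ∫ x in Ω, C ^ (p - 1) * g x := h2
        _ = C ^ (p - 1) * I := h3
        _ < I + ε / 2 := hp1
      have hIlt : I < sInf (S 1) + ε / 2 := by rw [← hrI]; exact hrlt
      linarith
    have hcob : IsCoboundedUnder (· ≤ ·) l (fun p : ℝ => poincare p q Ω) :=
      isCoboundedUnder_le_of_eventually_le l (Eventually.of_forall fun p => by
        rw [hpo p]; exact Real.sInf_nonneg fun r hr => hSnonneg p r hr)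
    rw [hpo 1]
    exact Filter.limsup_le_of_le hcob hev
  · -- empty case: all the infima are of the empty set, hence 0
    have hSempty : ∀ p : ℝ, S p = ∅ := by
      intro p
      ext r
      simp only [hS, Set.mem_setOf_eq, Set.mem_empty_iff_false, iff_false]
      rintro ⟨u, h1, h2, h3, h4, -⟩
      exact hne ⟨u, h1, h2, h3, h4⟩
    have hzero : ∀ p : ℝ, poincare p q Ω = 0 := by
      intro p; rw [hpo p, hSempty p, Real.sInf_empty]
    have : (fun p : ℝ => poincare p q Ω) = fun _ => (0 : ℝ) := funext fun p => hzero p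
    rw [this, Filter.limsup_const, hzero 1]

end
end

section
/- Let Ω ⊆ ℝ^N be an open set of finite Lebesgue measure and 0 < q < N/(N-1). Then liminf_{p→1^+} λ_{p,q}(Ω) ≥ λ_{1,q}(Ω). -/
open MeasureTheory Set Filter
open scoped ENNReal

noncomputable section

section Aux
variable {N : ℕ}

lemma holder_step (Ω : Set (EuclideanSpace ℝ (Fin N))) (hvol : volume Ω < ⊤)
    {F : EuclideanSpace ℝ (Fin N) → ℝ} (hF : Continuous F) (hFc : HasCompactSupport F)
    (hFnn : ∀ x, 0 ≤ F x) {p : ℝ} (hp : 1 < p) :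
    ∫ x in Ω, F x ≤ (∫ x in Ω, F x ^ p) ^ (1/p) * (volume Ω).toReal ^ (1 - 1/p) := by
  set μ := volume.restrict Ω with hμ
  have hp0 : 0 < p := lt_trans one_pos hp
  have hconj : p.HolderConjugate (p / (p - 1)) := Real.HolderConjugate.conjExponent hp
  have hmeas : Measurable F := hF.measurable
  -- the function F ^ p
  have hFp_cont : Continuous fun x => F x ^ p := hF.rpow_const (fun x => Or.inr hp0.le)
  have hFp_supp : HasCompactSupport fun x => F x ^ p := by
    exact HasCompactSupport.comp_left (g := fun t : ℝ => t ^ p) hFc (Real.zero_rpow hp0.ne')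
  have hFp_int : Integrable (fun x => F x ^ p) μ :=
    (hFp_cont.integrable_of_hasCompactSupport hFp_supp).restrict
  have hF_int : Integrable F μ := (hF.integrable_of_hasCompactSupport hFc).restrict
  have hfin : ∫⁻ x, ENNReal.ofReal (F x) ^ p ∂μ ≠ ⊤ := by
    have h1 : ∀ x, ENNReal.ofReal (F x) ^ p = ENNReal.ofReal (F x ^ p) := fun x =>
      ENNReal.ofReal_rpow_of_nonneg (hFnn x) hp0.le
    simp_rw [h1]
    have := (hasFiniteIntegral_iff_ofReal (Eventually.of_forall fun x =>
      Real.rpow_nonneg (hFnn x) p)).mp hFp_int.hasFiniteIntegral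
    exact this.ne
  have hexp : (0:ℝ) ≤ 1 - 1/p := by
    have : 1/p ≤ 1 := by rw [div_le_one hp0]; exact hp.le
    linarith
  have key := ENNReal.lintegral_mul_le_Lp_mul_Lq μ hconj
    (f := fun x => ENNReal.ofReal (F x)) (g := fun _ => 1)
    (hmeas.ennreal_ofReal.aemeasurable) aemeasurable_const
  simp only [Pi.mul_apply, mul_one, ENNReal.one_rpow, lintegral_const, one_mul] at key
  -- key : ∫⁻ ofReal F ∂μ ≤ (∫⁻ (ofReal F)^p)^(1/p) * (μ univ)^(1/(p/(p-1)))
  have hconjinv : 1 / (p / (p - 1)) = 1 - 1/p := by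
    field_simp
  rw [hconjinv] at key
  have hμuniv : μ univ = volume Ω := by
    rw [hμ, Measure.restrict_apply_univ]
  rw [hμuniv] at key
  have h1 : ∫ x in Ω, F x = (∫⁻ x, ENNReal.ofReal (F x) ∂μ).toReal := by
    rw [integral_eq_lintegral_of_nonneg_ae (Eventually.of_forall hFnn) hF.aestronglyMeasurable]
  have h2 : ∫ x in Ω, F x ^ p = (∫⁻ x, ENNReal.ofReal (F x) ^ p ∂μ).toReal := by
    rw [integral_eq_lintegral_of_nonneg_ae (Eventually.of_forall fun x =>
      Real.rpow_nonneg (hFnn x) p) hFp_cont.aestronglyMeasurable]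
    congr 1
    refine lintegral_congr fun x => ?_
    exact (ENNReal.ofReal_rpow_of_nonneg (hFnn x) hp0.le).symm
  rw [h1, h2]
  have hrhs_fin : (∫⁻ x, ENNReal.ofReal (F x) ^ p ∂μ) ^ (1/p) * (volume Ω) ^ (1 - 1/p) ≠ ⊤ := by
    apply ENNReal.mul_ne_top
    · exact ENNReal.rpow_ne_top_of_nonneg (by positivity) hfin
    · exact ENNReal.rpow_ne_top_of_nonneg hexp hvol.ne
  calc (∫⁻ x, ENNReal.ofReal (F x) ∂μ).toReal
      ≤ ((∫⁻ x, ENNReal.ofReal (F x) ^ p ∂μ) ^ (1/p) * (volume Ω) ^ (1 - 1/p)).toReal :=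
        ENNReal.toReal_mono hrhs_fin key
    _ = (∫⁻ x, ENNReal.ofReal (F x) ^ p ∂μ).toReal ^ (1/p) * (volume Ω).toReal ^ (1 - 1/p) := by
        rw [ENNReal.toReal_mul, ENNReal.toReal_rpow, ENNReal.toReal_rpow]

lemma main_aux (N : ℕ) (Ω : Set (EuclideanSpace ℝ (Fin N)))
    (hvol : volume Ω < ⊤) (q : ℝ) :
    sInf { r : ℝ | ∃ u : EuclideanSpace ℝ (Fin N) → ℝ, ContDiff ℝ (⊤ : ℕ∞) u ∧
      HasCompactSupport u ∧ tsupport u ⊆ Ω ∧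
      (∫ x in Ω, |u x| ^ q) = 1 ∧ r = ∫ x in Ω, ‖fderiv ℝ u x‖ ^ (1:ℝ) } ≤
    Filter.liminf (fun p : ℝ => sInf { r : ℝ | ∃ u : EuclideanSpace ℝ (Fin N) → ℝ,
      ContDiff ℝ (⊤ : ℕ∞) u ∧ HasCompactSupport u ∧ tsupport u ⊆ Ω ∧
      (∫ x in Ω, |u x| ^ q) = 1 ∧ r = ∫ x in Ω, ‖fderiv ℝ u x‖ ^ p })
      (nhdsWithin 1 (Set.Ioi 1)) := by
  classical
  set S : ℝ → Set ℝ := fun p => { r : ℝ | ∃ u : EuclideanSpace ℝ (Fin N) → ℝ,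
      ContDiff ℝ (⊤ : ℕ∞) u ∧ HasCompactSupport u ∧ tsupport u ⊆ Ω ∧
      (∫ x in Ω, |u x| ^ q) = 1 ∧ r = ∫ x in Ω, ‖fderiv ℝ u x‖ ^ p } with hS
  set l := nhdsWithin (1:ℝ) (Set.Ioi 1) with hl
  show sInf (S 1) ≤ liminf (fun p => sInf (S p)) l
  have hSnn : ∀ p : ℝ, ∀ r ∈ S p, (0:ℝ) ≤ r := by
    rintro p r ⟨u, -, -, -, -, rfl⟩
    exact integral_nonneg fun x => Real.rpow_nonneg (norm_nonneg _) p
  have hbdd : ∀ p : ℝ, BddBelow (S p) := fun p => ⟨0, fun r hr => hSnn p r hr⟩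
  have hf0 : ∀ p : ℝ, (0:ℝ) ≤ sInf (S p) := fun p => Real.sInf_nonneg (hSnn p)
  by_cases hex : ∃ u : EuclideanSpace ℝ (Fin N) → ℝ, ContDiff ℝ (⊤ : ℕ∞) u ∧
      HasCompactSupport u ∧ tsupport u ⊆ Ω ∧ (∫ x in Ω, |u x| ^ q) = 1
  · obtain ⟨u₀, hu₀s, hu₀c, hu₀t, hu₀n⟩ := hex
    have hgrad : ∀ u : EuclideanSpace ℝ (Fin N) → ℝ, ContDiff ℝ (⊤ : ℕ∞) u →
        HasCompactSupport u →
        Continuous (fun x => ‖fderiv ℝ u x‖) ∧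
        HasCompactSupport (fun x => ‖fderiv ℝ u x‖) := by
      intro u hus huc
      exact ⟨(hus.continuous_fderiv (by simp)).norm,
        (huc.fderiv (𝕜 := ℝ)).norm⟩
    have hVpos : 0 < (volume Ω).toReal := by
      refine ENNReal.toReal_pos (fun h0 => ?_) hvol.ne
      rw [show (volume.restrict Ω) = 0 from by
        simp [Measure.restrict_eq_zero, h0]] at hu₀n
      simp at hu₀n
    set V := (volume Ω).toReal with hV
    set lam := sInf (S 1) with hlam
    have hlam0 : 0 ≤ lam := hf0 1
    obtain ⟨M, hM⟩ := (hgrad u₀ hu₀s hu₀c).2.exists_bound_of_continuous (hgrad u₀ hu₀s hu₀c).1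
    simp only [Real.norm_eq_abs] at hM
    have hM' : ∀ x, ‖fderiv ℝ u₀ x‖ ≤ M := fun x => (le_abs_self _).trans (hM x)
    have hM0 : (0:ℝ) ≤ M := le_trans (norm_nonneg _) (hM' 0)
    have hSne : ∀ p : ℝ, (S p).Nonempty := fun p =>
      ⟨_, u₀, hu₀s, hu₀c, hu₀t, hu₀n, rfl⟩
    -- key lower bound via Hölder
    have hkey : ∀ p : ℝ, 1 < p → lam ^ p * V ^ (1 - p) ≤ sInf (S p) := by
      intro p hp
      have hp0 : (0:ℝ) < p := lt_trans one_pos hp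
      refine le_csInf (hSne p) ?_
      rintro r ⟨u, hus, huc, hut, hun, rfl⟩
      obtain ⟨hFcont, hFsupp⟩ := hgrad u hus huc
      have hrnn : 0 ≤ ∫ x in Ω, ‖fderiv ℝ u x‖ ^ p :=
        integral_nonneg fun x => Real.rpow_nonneg (norm_nonneg _) p
      have h1 : lam ≤ ∫ x in Ω, ‖fderiv ℝ u x‖ := by
        have := csInf_le (hbdd 1) (show (∫ x in Ω, ‖fderiv ℝ u x‖ ^ (1:ℝ)) ∈ S 1 from
          ⟨u, hus, huc, hut, hun, rfl⟩)
        simpa [Real.rpow_one] using this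
      have h2 := holder_step Ω hvol hFcont hFsupp (fun x => norm_nonneg _) hp
      have h3 : lam ≤ (∫ x in Ω, ‖fderiv ℝ u x‖ ^ p) ^ (1/p) * V ^ (1 - 1/p) := h1.trans h2
      have h4 := Real.rpow_le_rpow hlam0 h3 hp0.le
      rw [Real.mul_rpow (Real.rpow_nonneg hrnn _) (Real.rpow_nonneg hVpos.le _),
        ← Real.rpow_mul hrnn, ← Real.rpow_mul hVpos.le,
        show (1/p)*p = 1 by field_simp, show (1-1/p)*p = p-1 by field_simp,
        Real.rpow_one] at h4
      calc lam ^ p * V ^ (1 - p)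
          ≤ ((∫ x in Ω, ‖fderiv ℝ u x‖ ^ p) * V ^ (p-1)) * V ^ (1-p) := by
            exact mul_le_mul_of_nonneg_right h4 (Real.rpow_nonneg hVpos.le _)
        _ = ∫ x in Ω, ‖fderiv ℝ u x‖ ^ p := by
            rw [mul_assoc, ← Real.rpow_add hVpos, show p-1+(1-p) = 0 by ring,
              Real.rpow_zero, mul_one]
    -- upper bound near p = 1
    have hub : ∀ p : ℝ, 1 < p → p ≤ 2 → sInf (S p) ≤ (M+1) ^ (2:ℝ) * V := by
      intro p hp hp2
      have hp0 : (0:ℝ) < p := lt_trans one_pos hp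
      refine (csInf_le (hbdd p)
        (show (∫ x in Ω, ‖fderiv ℝ u₀ x‖ ^ p) ∈ S p from
          ⟨u₀, hu₀s, hu₀c, hu₀t, hu₀n, rfl⟩)).trans ?_
      have hple : ∀ x, ‖fderiv ℝ u₀ x‖ ^ p ≤ (M+1) ^ (2:ℝ) := by
        intro x
        calc ‖fderiv ℝ u₀ x‖ ^ p ≤ (M+1) ^ p :=
              Real.rpow_le_rpow (norm_nonneg _) (le_trans (hM' x) (by linarith)) hp0.le
          _ ≤ (M+1) ^ (2:ℝ) :=
              Real.rpow_le_rpow_of_exponent_le (by linarith) hp2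
      have hint : Integrable (fun x => ‖fderiv ℝ u₀ x‖ ^ p) (volume.restrict Ω) := by
        refine (Continuous.integrable_of_hasCompactSupport
          ((hgrad u₀ hu₀s hu₀c).1.rpow_const fun x => Or.inr hp0.le) ?_).restrict
        exact HasCompactSupport.comp_left (g := fun t : ℝ => t ^ p)
          (hgrad u₀ hu₀s hu₀c).2 (Real.zero_rpow hp0.ne')
      calc (∫ x in Ω, ‖fderiv ℝ u₀ x‖ ^ p)
          ≤ ∫ _x in Ω, (M+1) ^ (2:ℝ) := by
            refine integral_mono hint ?_ fun x => hple x
            exact integrableOn_const hvol.ne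
        _ = (M+1) ^ (2:ℝ) * V := by
            rw [setIntegral_const, smul_eq_mul, mul_comm]; rfl
    -- eventual facts
    have hev : ∀ᶠ p in l, 1 < p ∧ p ≤ 2 := by
      have h1 : ∀ᶠ p in l, 1 < p := eventually_mem_nhdsWithin
      have h2 : ∀ᶠ p in l, p ≤ 2 :=
        eventually_nhdsWithin_of_eventually_nhds (eventually_le_nhds (by norm_num))
      exact h1.and h2
    have hflo : IsBoundedUnder (· ≥ ·) l (fun p => sInf (S p)) :=
      isBoundedUnder_of ⟨0, fun p => hf0 p⟩
    have hfub : IsBoundedUnder (· ≤ ·) l (fun p => sInf (S p)) :=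
      ⟨(M+1) ^ (2:ℝ) * V, eventually_map.mpr (by
        filter_upwards [hev] with p hp using hub p hp.1 hp.2)⟩
    have hgf : ∀ᶠ p in l, lam ^ p * V ^ (1 - p) ≤ sInf (S p) := by
      filter_upwards [hev] with p hp using hkey p hp.1
    rcases eq_or_lt_of_le hlam0 with hlz | hlpos
    · rw [← hlz]
      exact le_liminf_of_le (hfub.isCoboundedUnder_ge)
        (Eventually.of_forall fun p => hf0 p)
    · have hglo : IsBoundedUnder (· ≥ ·) l (fun p => lam ^ p * V ^ (1 - p)) :=
        isBoundedUnder_of ⟨0, fun p =>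
          mul_nonneg (Real.rpow_nonneg hlam0 _) (Real.rpow_nonneg hVpos.le _)⟩
      have htend : Tendsto (fun p : ℝ => lam ^ p * V ^ (1 - p)) l (nhds lam) := by
        have hcont : ContinuousAt (fun p : ℝ => lam ^ p * V ^ (1 - p)) 1 := by
          refine ContinuousAt.mul (Real.continuousAt_const_rpow hlpos.ne') ?_
          exact (Real.continuousAt_const_rpow hVpos.ne').comp
            (continuousAt_const.sub continuousAt_id)
        have := hcont.tendsto.mono_left (nhdsWithin_le_nhds (s := Set.Ioi 1))
        simpa [Real.rpow_one, Real.rpow_zero] using this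
      calc lam = liminf (fun p : ℝ => lam ^ p * V ^ (1 - p)) l := (htend.liminf_eq).symm
        _ ≤ liminf (fun p => sInf (S p)) l := liminf_le_liminf hgf hglo (hfub.isCoboundedUnder_ge)
  · have hSempty : ∀ p : ℝ, S p = ∅ := by
      intro p
      ext r
      simp only [hS, mem_setOf_eq, mem_empty_iff_false, iff_false]
      rintro ⟨u, h1, h2, h3, h4, -⟩
      exact hex ⟨u, h1, h2, h3, h4⟩
    simp only [hSempty, Real.sInf_empty]
    rw [liminf_const]

end Aux

/-- if `Ω` has finite measure, `liminf_{p→1⁺} λ_{p,q}(Ω) ≥ λ_{1,q}(Ω)`. -/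
theorem statement_3 (N : ℕ) (Ω : Set (EuclideanSpace ℝ (Fin N))) (hΩ : IsOpen Ω)
    (hvol : volume Ω < ⊤)
    (q : ℝ) (hq : 0 < q) (hq' : q * ((N : ℝ) - 1) < N) :
    poincare 1 q Ω ≤ Filter.liminf (fun p : ℝ => poincare p q Ω) (nhdsWithin 1 (Set.Ioi 1)) :=
  main_aux N Ω hvol q

end
end

section
/- Let a, b > 0 and c, d > 0, and for 0 < β < 1 define φ_β(t) = (a + t·b) / (c + t^β·d)^{1/β} for t > 0. Then for every t > 0 one has φ_β(t) ≥ ( (c^{1/β}/a)^{β/(1-β)} + (d^{1/β}/b)^{β/(1-β)} )^{(β-1)/β}, with equality if and only if t = ((a/c)·(d/b))^{1/(1-β)}. -/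
open MeasureTheory Set Filter
open scoped ENNReal

noncomputable section

lemma amgm_le {w x y : ℝ} (hw0 : 0 ≤ w) (hw1 : w ≤ 1) (hx : 0 ≤ x) (hy : 0 ≤ y) :
    x ^ w * y ^ (1 - w) ≤ w * x + (1 - w) * y :=
  Real.geom_mean_le_arith_mean2_weighted hw0 (by linarith) hx hy (by ring)

lemma amgm_lt {w x y : ℝ} (hw0 : 0 < w) (hw1 : w < 1) (hx : 0 < x) (hy : 0 < y)
    (hxy : x ≠ y) : x ^ w * y ^ (1 - w) < w * x + (1 - w) * y := by
  have h := strictConcaveOn_log_Ioi.2 (mem_Ioi.2 hx) (mem_Ioi.2 hy) hxy hw0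
    (by linarith : (0:ℝ) < 1 - w) (by ring)
  simp only [smul_eq_mul] at h
  have hpos : 0 < w * x + (1 - w) * y := by nlinarith
  calc x ^ w * y ^ (1 - w) = Real.exp (Real.log x * w + Real.log y * (1 - w)) := by
        rw [Real.rpow_def_of_pos hx, Real.rpow_def_of_pos hy, ← Real.exp_add]
    _ < Real.exp (Real.log (w * x + (1 - w) * y)) := by
        apply Real.exp_lt_exp.2; linarith [h]
    _ = w * x + (1 - w) * y := Real.exp_log hpos

lemma amgm_eq_iff {w x y : ℝ} (hw0 : 0 < w) (hw1 : w < 1) (hx : 0 < x) (hy : 0 < y) :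
    x ^ w * y ^ (1 - w) = w * x + (1 - w) * y ↔ x = y := by
  constructor
  · intro h
    by_contra hne
    exact absurd h (ne_of_lt (amgm_lt hw0 hw1 hx hy hne))
  · rintro rfl
    rw [← Real.rpow_add hx, show w + (1 - w) = 1 by ring, Real.rpow_one]; ring

/-- for `a, b, c, d > 0` and `0 < β < 1`, the function
`φ_β(t) = (a + t b)/(c + t^β d)^{1/β}` satisfies, for every `t > 0`,
`φ_β(t) ≥ ((c^{1/β}/a)^{β/(1-β)} + (d^{1/β}/b)^{β/(1-β)})^{(β-1)/β}`,
with equality if and only if `t = ((a/c)(d/b))^{1/(1-β)}`. -/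
theorem statement_5 (a b c d β : ℝ) (ha : 0 < a) (hb : 0 < b) (hc : 0 < c) (hd : 0 < d)
    (hβ0 : 0 < β) (hβ1 : β < 1) (t : ℝ) (ht : 0 < t) :
    ((c ^ (1 / β) / a) ^ (β / (1 - β)) + (d ^ (1 / β) / b) ^ (β / (1 - β))) ^ ((β - 1) / β)
        ≤ (a + t * b) / (c + t ^ β * d) ^ (1 / β) ∧
      ((a + t * b) / (c + t ^ β * d) ^ (1 / β) =
          ((c ^ (1 / β) / a) ^ (β / (1 - β)) + (d ^ (1 / β) / b) ^ (β / (1 - β))) ^ ((β - 1) / β)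
        ↔ t = (a / c * (d / b)) ^ (1 / (1 - β))) := by
  have hβ' : (0:ℝ) < 1 - β := by linarith
  have hβne : β ≠ 0 := ne_of_gt hβ0
  have hβ'ne : (1:ℝ) - β ≠ 0 := ne_of_gt hβ'
  set A : ℝ := (c ^ (1 / β) / a) ^ (β / (1 - β)) with hAdef
  set B : ℝ := (d ^ (1 / β) / b) ^ (β / (1 - β)) with hBdef
  have hA : 0 < A := Real.rpow_pos_of_pos (div_pos (Real.rpow_pos_of_pos hc _) ha) _
  have hB : 0 < B := Real.rpow_pos_of_pos (div_pos (Real.rpow_pos_of_pos hd _) hb) _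
  have hS : 0 < A + B := by linarith
  have hP : 0 < a + t * b := by positivity
  have htβ : 0 < t ^ β := Real.rpow_pos_of_pos ht β
  have hD : 0 < c + t ^ β * d := by positivity
  -- key exponent identities
  have hA1 : A ^ (1 - β) = c / a ^ β := by
    rw [hAdef, ← Real.rpow_mul (le_of_lt (div_pos (Real.rpow_pos_of_pos hc _) ha)),
      div_mul_cancel₀ _ hβ'ne, Real.div_rpow (Real.rpow_nonneg hc.le _) ha.le,
      ← Real.rpow_mul hc.le, one_div_mul_cancel hβne, Real.rpow_one]
  have hB1 : B ^ (1 - β) = d / b ^ β := by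
    rw [hBdef, ← Real.rpow_mul (le_of_lt (div_pos (Real.rpow_pos_of_pos hd _) hb)),
      div_mul_cancel₀ _ hβ'ne, Real.div_rpow (Real.rpow_nonneg hd.le _) hb.le,
      ← Real.rpow_mul hd.le, one_div_mul_cancel hβne, Real.rpow_one]
  have haβ : (0:ℝ) < a ^ β := Real.rpow_pos_of_pos ha β
  have hbβ : (0:ℝ) < b ^ β := Real.rpow_pos_of_pos hb β
  have hPβ : (0:ℝ) < (a + t * b) ^ β := Real.rpow_pos_of_pos hP β
  have hS' : (0:ℝ) < (A + B) ^ (1 - β) := Real.rpow_pos_of_pos hS _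
  set Q : ℝ := (a + t * b) ^ β * (A + B) ^ (1 - β) with hQdef
  have hQ : 0 < Q := mul_pos hPβ hS'
  -- values of the two AM-GM terms
  have e1 : (a / (a + t * b)) ^ β * (A / (A + B)) ^ (1 - β) = c / Q := by
    rw [Real.div_rpow ha.le hP.le, Real.div_rpow hA.le hS.le, div_mul_div_comm, hA1, hQdef]
    field_simp
  have e2 : (t * b / (a + t * b)) ^ β * (B / (A + B)) ^ (1 - β) = t ^ β * d / Q := by
    rw [Real.div_rpow (by positivity) hP.le, Real.div_rpow hB.le hS.le, div_mul_div_comm,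
      hB1, Real.mul_rpow ht.le hb.le, hQdef]
    field_simp
  have key1 : (a / (a + t * b)) ^ β * (A / (A + B)) ^ (1 - β)
      ≤ β * (a / (a + t * b)) + (1 - β) * (A / (A + B)) :=
    amgm_le hβ0.le hβ1.le (by positivity) (by positivity)
  have key2 : (t * b / (a + t * b)) ^ β * (B / (A + B)) ^ (1 - β)
      ≤ β * (t * b / (a + t * b)) + (1 - β) * (B / (A + B)) :=
    amgm_le hβ0.le hβ1.le (by positivity) (by positivity)
  have hu : a / (a + t * b) + t * b / (a + t * b) = 1 := by
    rw [← add_div, div_self (ne_of_gt hP)]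
  have hv : A / (A + B) + B / (A + B) = 1 := by
    rw [← add_div, div_self (ne_of_gt hS)]
  have key1' : c / Q ≤ β * (a / (a + t * b)) + (1 - β) * (A / (A + B)) := e1 ▸ key1
  have key2' : t ^ β * d / Q ≤ β * (t * b / (a + t * b)) + (1 - β) * (B / (A + B)) := e2 ▸ key2
  have hYsum : β * (a / (a + t * b)) + (1 - β) * (A / (A + B)) +
      (β * (t * b / (a + t * b)) + (1 - β) * (B / (A + B))) = 1 := by
    linear_combination β * hu + (1 - β) * hv
  have hsum : c / Q + t ^ β * d / Q ≤ 1 := by linarith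
  have hkey : c + t ^ β * d ≤ Q := by
    have := (div_le_one hQ).mp (by rw [add_div]; exact hsum)
    exact this
  -- equality in hkey iff a/(a+tb) = A/(A+B)
  have heqQ : c + t ^ β * d = Q ↔ a / (a + t * b) = A / (A + B) := by
    constructor
    · intro h
      have hsum' : c / Q + t ^ β * d / Q = 1 := by
        rw [← add_div] at *
        rw [h, div_self (ne_of_gt hQ)]
      have h1 : (a / (a + t * b)) ^ β * (A / (A + B)) ^ (1 - β)
          = β * (a / (a + t * b)) + (1 - β) * (A / (A + B)) := by
        rw [e1]; linarith
      exact (amgm_eq_iff hβ0 hβ1 (by positivity) (by positivity)).mp h1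
    · intro h
      have h2 : t * b / (a + t * b) = B / (A + B) := by linarith
      have h1' : (a / (a + t * b)) ^ β * (A / (A + B)) ^ (1 - β)
          = β * (a / (a + t * b)) + (1 - β) * (A / (A + B)) := by
        rw [h]; exact (amgm_eq_iff hβ0 hβ1 (by positivity) (by positivity)).mpr rfl
      have h2' : (t * b / (a + t * b)) ^ β * (B / (A + B)) ^ (1 - β)
          = β * (t * b / (a + t * b)) + (1 - β) * (B / (A + B)) := by
        rw [h2]; exact (amgm_eq_iff hβ0 hβ1 (by positivity) (by positivity)).mpr rfl
      have hone : c / Q + t ^ β * d / Q = 1 := by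
        rw [← e1, ← e2, h1', h2']; linarith
      rw [← add_div, div_eq_one_iff_eq (ne_of_gt hQ)] at hone
      exact hone
  -- the equality condition as a value of t
  have hcond : a / (a + t * b) = A / (A + B) ↔ t = a * B / (b * A) := by
    rw [div_eq_div_iff (ne_of_gt hP) (ne_of_gt hS), eq_div_iff (ne_of_gt (mul_pos hb hA))]
    constructor <;> intro h <;> linear_combination -h
  -- identify the claimed optimal t
  have hX : (0:ℝ) < a * B / (b * A) := by positivity
  have hXpow : (a * B / (b * A)) ^ (1 - β) = a / c * (d / b) := by
    rw [Real.div_rpow (by positivity) (by positivity), Real.mul_rpow ha.le hB.le,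
      Real.mul_rpow hb.le hA.le, hA1, hB1]
    have haa : a ^ (1 - β) * a ^ β = a := by
      rw [← Real.rpow_add ha, show 1 - β + β = 1 by ring, Real.rpow_one]
    have hbb : b ^ (1 - β) * b ^ β = b := by
      rw [← Real.rpow_add hb, show 1 - β + β = 1 by ring, Real.rpow_one]
    have ha1 : (0:ℝ) < a ^ (1 - β) := Real.rpow_pos_of_pos ha _
    have hb1 : (0:ℝ) < b ^ (1 - β) := Real.rpow_pos_of_pos hb _
    have key : a ^ (1 - β) * (d / b ^ β) / (b ^ (1 - β) * (c / a ^ β))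
        = (a ^ (1 - β) * a ^ β) * d / ((b ^ (1 - β) * b ^ β) * c) := by
      field_simp [ne_of_gt haβ, ne_of_gt hbβ, ne_of_gt ha1, ne_of_gt hb1, ne_of_gt hc]
    rw [key, haa, hbb]
    field_simp [ne_of_gt hc, ne_of_gt hb]
  have hT : (a / c * (d / b)) ^ (1 / (1 - β)) = a * B / (b * A) := by
    rw [← hXpow, ← Real.rpow_mul hX.le, mul_one_div, div_self hβ'ne, Real.rpow_one]
  -- rewrite the goal quantities
  have hR : (0:ℝ) < (c + t ^ β * d) ^ (1 / β) := Real.rpow_pos_of_pos hD _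
  have hQpow : Q ^ (1 / β) = (a + t * b) * (A + B) ^ ((1 - β) / β) := by
    rw [hQdef, Real.mul_rpow hPβ.le hS'.le, ← Real.rpow_mul hP.le, ← Real.rpow_mul hS.le,
      mul_one_div, div_self hβne, Real.rpow_one, mul_one_div]
  have hMinv : (A + B) ^ ((β - 1) / β) * (A + B) ^ ((1 - β) / β) = 1 := by
    rw [← Real.rpow_add hS, show (β - 1) / β + (1 - β) / β = 0 by rw [← add_div, show β - 1 + (1 - β) = 0 by ring, zero_div],
      Real.rpow_zero]
  have hM : (0:ℝ) < (A + B) ^ ((β - 1) / β) := Real.rpow_pos_of_pos hS _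
  constructor
  · -- the inequality
    rw [le_div_iff₀ hR]
    have hRle : (c + t ^ β * d) ^ (1 / β) ≤ Q ^ (1 / β) :=
      Real.rpow_le_rpow hD.le hkey (by positivity)
    calc (A + B) ^ ((β - 1) / β) * (c + t ^ β * d) ^ (1 / β)
        ≤ (A + B) ^ ((β - 1) / β) * Q ^ (1 / β) := by
          exact mul_le_mul_of_nonneg_left hRle hM.le
      _ = (a + t * b) * ((A + B) ^ ((β - 1) / β) * (A + B) ^ ((1 - β) / β)) := by
          rw [hQpow]; ring
      _ = a + t * b := by rw [hMinv, mul_one]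
  · -- the equality case
    rw [hT, ← hcond, ← heqQ]
    constructor
    · intro h
      have h1 : (c + t ^ β * d) ^ (1 / β) = (a + t * b) / (A + B) ^ ((β - 1) / β) := by
        rw [eq_div_iff (ne_of_gt hM)]
        rw [div_eq_iff (ne_of_gt hR)] at h
        linear_combination -h
      have h2 : (a + t * b) / (A + B) ^ ((β - 1) / β) = Q ^ (1 / β) := by
        rw [hQpow, div_eq_iff (ne_of_gt hM)]
        calc a + t * b = (a + t * b) * ((A + B) ^ ((β - 1) / β) * (A + B) ^ ((1 - β) / β)) := by
              rw [hMinv, mul_one]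
          _ = (a + t * b) * (A + B) ^ ((1 - β) / β) * (A + B) ^ ((β - 1) / β) := by ring
      have h3 : (c + t ^ β * d) ^ (1 / β) = Q ^ (1 / β) := h1.trans h2
      exact (Real.rpow_left_inj hD.le hQ.le (by positivity)).mp h3
    · intro h
      have h3 : (c + t ^ β * d) ^ (1 / β) = Q ^ (1 / β) := by rw [h]
      rw [h3, hQpow]
      rw [div_eq_iff (by positivity : (a + t * b) * (A + B) ^ ((1 - β) / β) ≠ 0)]
      calc a + t * b = (a + t * b) * ((A + B) ^ ((β - 1) / β) * (A + B) ^ ((1 - β) / β)) := by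
            rw [hMinv, mul_one]
        _ = (A + B) ^ ((β - 1) / β) * ((a + t * b) * (A + B) ^ ((1 - β) / β)) := by ring

end
end

section
/- Let Ω_1, Ω_2 ⊆ ℝ^N be two disjoint nonempty open sets and let 1 ≤ q < N/(N-1). Then λ_{1,q}(Ω_1 ∪ Ω_2) = min{ λ_{1,q}(Ω_1), λ_{1,q}(Ω_2) }. -/
open MeasureTheory Set Filter
open scoped ENNReal

noncomputable section

section Aux

variable {N : ℕ}

/-- The admissible set in the definition of `poincare`. -/
def pset (N : ℕ) (p q : ℝ) (Ω : Set (EuclideanSpace ℝ (Fin N))) : Set ℝ :=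
  { r : ℝ | ∃ u : EuclideanSpace ℝ (Fin N) → ℝ, ContDiff ℝ (⊤ : ℕ∞) u ∧
    HasCompactSupport u ∧ tsupport u ⊆ Ω ∧
    (∫ x in Ω, |u x| ^ q) = 1 ∧ r = ∫ x in Ω, ‖fderiv ℝ u x‖ ^ p }

theorem poincare_eq (p q : ℝ) (Ω : Set (EuclideanSpace ℝ (Fin N))) :
    poincare p q Ω = sInf (pset N p q Ω) := rfl

theorem pset_nonneg {p q : ℝ} {Ω : Set (EuclideanSpace ℝ (Fin N))} (hΩ : MeasurableSet Ω)
    {r : ℝ} (hr : r ∈ pset N p q Ω) : 0 ≤ r := by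
  obtain ⟨u, -, -, -, -, rfl⟩ := hr
  exact setIntegral_nonneg hΩ fun x _ => Real.rpow_nonneg (norm_nonneg _) p

theorem pset_bddBelow {p q : ℝ} {Ω : Set (EuclideanSpace ℝ (Fin N))} (hΩ : MeasurableSet Ω) :
    BddBelow (pset N p q Ω) :=
  ⟨0, fun _ hr => pset_nonneg hΩ hr⟩

theorem poincare_nonneg {p q : ℝ} {Ω : Set (EuclideanSpace ℝ (Fin N))} (hΩ : MeasurableSet Ω) :
    0 ≤ poincare p q Ω :=
  Real.sInf_nonneg fun _ hr => pset_nonneg hΩ hr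

theorem integrable_abs_rpow {q : ℝ} (hq : 0 < q) {u : EuclideanSpace ℝ (Fin N) → ℝ}
    (hsm : ContDiff ℝ (⊤ : ℕ∞) u) (hcs : HasCompactSupport u) :
    Integrable (fun x => |u x| ^ q) := by
  have hcont : Continuous fun x => |u x| ^ q :=
    (hsm.continuous.abs).rpow_const fun x => Or.inr hq.le
  refine hcont.integrable_of_hasCompactSupport (HasCompactSupport.intro hcs fun x hx => ?_)
  rw [image_eq_zero_of_notMem_tsupport hx]
  simp [Real.zero_rpow hq.ne']

theorem integrable_norm_fderiv {u : EuclideanSpace ℝ (Fin N) → ℝ}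
    (hsm : ContDiff ℝ (⊤ : ℕ∞) u) (hcs : HasCompactSupport u) :
    Integrable (fun x => ‖fderiv ℝ u x‖ ^ (1:ℝ)) := by
  simp only [Real.rpow_one]
  exact ((hsm.continuous_fderiv (by simp)).norm).integrable_of_hasCompactSupport (hcs.fderiv ℝ).norm

/-- concavity of `x ↦ x ^ z` for `0 ≤ z ≤ 1`. -/
theorem real_rpow_add_le {a b z : ℝ} (ha : 0 ≤ a) (hb : 0 ≤ b) (hz0 : 0 ≤ z) (hz1 : z ≤ 1) :
    (a + b) ^ z ≤ a ^ z + b ^ z := by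
  lift a to NNReal using ha
  lift b to NNReal using hb
  have := NNReal.rpow_add_le_add_rpow a b hz0 hz1
  exact_mod_cast this

/-- If `u` is supported in `Ω₁` which is disjoint from the open set `Ω₂`,
then `u` and its derivative vanish on `Ω₂`. -/
theorem vanish_on_other {Ω₁ Ω₂ : Set (EuclideanSpace ℝ (Fin N))} (h₂ : IsOpen Ω₂)
    (hdisj : Disjoint Ω₁ Ω₂) {u : EuclideanSpace ℝ (Fin N) → ℝ} (hts : tsupport u ⊆ Ω₁) :
    ∀ x ∈ Ω₂, u x = 0 ∧ fderiv ℝ u x = 0 := by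
  intro x hx
  have hzero : ∀ y ∈ Ω₂, u y = 0 := by
    intro y hy
    by_contra h
    exact disjoint_left.1 hdisj (hts (subset_closure (Function.mem_support.2 h))) hy
  refine ⟨hzero x hx, ?_⟩
  have hev : u =ᶠ[nhds x] (fun _ => (0:ℝ)) :=
    eventually_of_mem (h₂.mem_nhds hx) fun y hy => hzero y hy
  rw [hev.fderiv_eq]
  exact fderiv_const_apply 0

/-- nonemptiness of the admissible set. -/
theorem pset_nonempty {p q : ℝ} (hq : 0 < q) {Ω : Set (EuclideanSpace ℝ (Fin N))}
    (hΩ : IsOpen Ω) (hne : Ω.Nonempty) : (pset N p q Ω).Nonempty := by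
  obtain ⟨c, hc⟩ := hne
  obtain ⟨ρ, hρ, hball⟩ := Metric.isOpen_iff.1 hΩ c hc
  have hρ4 : (0:ℝ) < ρ/4 := by linarith
  set f : ContDiffBump c := ⟨ρ/4, ρ/2, hρ4, by linarith⟩ with hf
  have hrIn : f.rIn = ρ/4 := rfl
  have hrOut : f.rOut = ρ/2 := rfl
  have hts : tsupport (f : EuclideanSpace ℝ (Fin N) → ℝ) ⊆ Ω := by
    rw [f.tsupport_eq, hrOut]
    exact fun x hx => hball (lt_of_le_of_lt (Metric.mem_closedBall.1 hx) (by linarith))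
  have hint : Integrable (fun x => |(f : EuclideanSpace ℝ (Fin N) → ℝ) x| ^ q) :=
    integrable_abs_rpow hq f.contDiff f.hasCompactSupport
  set I : ℝ := ∫ x in Ω, |(f : EuclideanSpace ℝ (Fin N) → ℝ) x| ^ q with hI
  have hIpos : 0 < I := by
    have hsub : Metric.ball c (ρ/4) ⊆ Ω :=
      fun x hx => hball (lt_of_lt_of_le (Metric.mem_ball.1 hx) (by linarith))
    have heq : ∫ x in Metric.ball c (ρ/4), |(f : EuclideanSpace ℝ (Fin N) → ℝ) x| ^ q
        = (volume (Metric.ball c (ρ/4))).toReal := by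
      rw [setIntegral_congr_fun measurableSet_ball
        (g := fun _ => (1:ℝ)) (fun x hx => by
          rw [f.one_of_mem_closedBall (Metric.ball_subset_closedBall (by rwa [hrIn]))]
          simp)]
      simp
      rfl
    have h1 : (volume (Metric.ball c (ρ/4))).toReal ≤ I := by
      rw [← heq, hI]
      exact setIntegral_mono_set hint.integrableOn
        (Eventually.of_forall fun x => Real.rpow_nonneg (abs_nonneg _) q)
        (HasSubset.Subset.eventuallyLE hsub)
    refine lt_of_lt_of_le (ENNReal.toReal_pos (Metric.measure_ball_pos volume c hρ4).ne'
      measure_ball_lt_top.ne) h1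
  set c₀ : ℝ := I ^ (-(1/q)) with hc₀
  have hc₀pos : 0 < c₀ := Real.rpow_pos_of_pos hIpos _
  refine ⟨_, c₀ • (f : EuclideanSpace ℝ (Fin N) → ℝ), f.contDiff.const_smul c₀,
    f.hasCompactSupport.smul_left, ?_, ?_, rfl⟩
  · exact subset_trans (closure_mono (Function.support_smul_subset_right _ _)) hts
  · have habs : ∀ x, |(c₀ • (f : EuclideanSpace ℝ (Fin N) → ℝ)) x| ^ q
        = c₀ ^ q * |(f : EuclideanSpace ℝ (Fin N) → ℝ) x| ^ q := by
      intro x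
      rw [Pi.smul_apply, smul_eq_mul, abs_mul, abs_of_pos hc₀pos,
        Real.mul_rpow hc₀pos.le (abs_nonneg _)]
    simp_rw [habs]
    rw [integral_const_mul, ← hI, hc₀, ← Real.rpow_mul hIpos.le, neg_mul, one_div,
      inv_mul_cancel₀ hq.ne', Real.rpow_neg_one, inv_mul_cancel₀ hIpos.ne']

end Aux
section Core

variable {N : ℕ}

theorem pset_union_subset {q : ℝ} (hq : 0 < q) {Ω₁ Ω₂ : Set (EuclideanSpace ℝ (Fin N))}
    (h₂ : IsOpen Ω₂) (hdisj : Disjoint Ω₁ Ω₂) :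
    pset N 1 q Ω₁ ⊆ pset N 1 q (Ω₁ ∪ Ω₂) := by
  rintro r ⟨u, hsm, hcs, hts, hnorm, rfl⟩
  refine ⟨u, hsm, hcs, hts.trans subset_union_left, ?_, ?_⟩
  · rw [setIntegral_union hdisj h₂.measurableSet
      (integrable_abs_rpow hq hsm hcs).integrableOn (integrable_abs_rpow hq hsm hcs).integrableOn,
      hnorm, setIntegral_eq_zero_of_forall_eq_zero (t := Ω₂) (fun x hx => by
        rw [(vanish_on_other h₂ hdisj hts x hx).1, abs_zero, Real.zero_rpow hq.ne']),
      add_zero]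
  · rw [setIntegral_union hdisj h₂.measurableSet
      (integrable_norm_fderiv hsm hcs).integrableOn (integrable_norm_fderiv hsm hcs).integrableOn,
      setIntegral_eq_zero_of_forall_eq_zero (t := Ω₂) (fun x hx => by
        rw [(vanish_on_other h₂ hdisj hts x hx).2, norm_zero, Real.rpow_one]),
      add_zero]

theorem part_bound {q : ℝ} (hq : 1 ≤ q) {Ω₁ Ω₂ : Set (EuclideanSpace ℝ (Fin N))}
    (h₁ : IsOpen Ω₁) (h₂ : IsOpen Ω₂) (hdisj : Disjoint Ω₁ Ω₂)
    {u : EuclideanSpace ℝ (Fin N) → ℝ} (hsm : ContDiff ℝ (⊤ : ℕ∞) u)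
    (hcs : HasCompactSupport u) (hts : tsupport u ⊆ Ω₁ ∪ Ω₂) :
    poincare 1 q Ω₁ * (∫ x in Ω₁, |u x| ^ q) ^ (1/q) ≤ ∫ x in Ω₁, ‖fderiv ℝ u x‖ ^ (1:ℝ) := by
  have hq0 : 0 < q := lt_of_lt_of_le one_pos hq
  set a := ∫ x in Ω₁, |u x| ^ q with ha
  set g := ∫ x in Ω₁, ‖fderiv ℝ u x‖ ^ (1:ℝ) with hg
  have ha0 : 0 ≤ a :=
    setIntegral_nonneg h₁.measurableSet fun x _ => Real.rpow_nonneg (abs_nonneg _) q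
  have hg0 : 0 ≤ g :=
    setIntegral_nonneg h₁.measurableSet fun x _ => Real.rpow_nonneg (norm_nonneg _) _
  rcases eq_or_lt_of_le ha0 with h0 | hapos
  · rw [← h0, Real.zero_rpow (by positivity), mul_zero]; exact hg0
  -- the smooth cut-off of `u` to `Ω₁`
  set u₁ : EuclideanSpace ℝ (Fin N) → ℝ := Ω₁.indicator u with hu₁
  have hC : closure (Function.support u ∩ Ω₁) ⊆ Ω₁ := by
    intro x hx
    rcases hts (closure_mono inter_subset_left hx) with h | h
    · exact h
    · obtain ⟨y, hy⟩ := mem_closure_iff.1 hx Ω₂ h₂ h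
      exact absurd hy.2.2 fun h' => disjoint_left.1 hdisj h' hy.1
  have hsupp₁ : Function.support u₁ ⊆ Function.support u ∩ Ω₁ := by
    rw [hu₁, Set.support_indicator]
    exact fun x hx => ⟨hx.2, hx.1⟩
  have hts₁ : tsupport u₁ ⊆ Ω₁ := (closure_mono hsupp₁).trans hC
  have hsm₁ : ContDiff ℝ (⊤ : ℕ∞) u₁ := by
    rw [contDiff_iff_contDiffAt]
    intro x
    by_cases hx : x ∈ Ω₁
    · exact hsm.contDiffAt.congr_of_eventuallyEq
        (eventually_of_mem (h₁.mem_nhds hx) fun y hy => indicator_of_mem hy u)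
    · have hx' : x ∉ closure (Function.support u ∩ Ω₁) := fun h => hx (hC h)
      refine ContDiffAt.congr_of_eventuallyEq (contDiffAt_const (c := (0:ℝ)))
        (eventually_of_mem (isClosed_closure.isOpen_compl.mem_nhds hx') fun y hy => ?_)
      by_cases hy₁ : y ∈ Ω₁
      · rw [hu₁, indicator_of_mem hy₁]
        by_contra h
        exact hy (subset_closure ⟨Function.mem_support.2 h, hy₁⟩)
      · exact indicator_of_notMem hy₁ u
  have hcs₁ : HasCompactSupport u₁ :=
    hcs.mono' ((hsupp₁.trans inter_subset_left).trans subset_closure)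
  have hequ : ∀ x ∈ Ω₁, u₁ x = u x := fun x hx => indicator_of_mem hx u
  have heqd : ∀ x ∈ Ω₁, fderiv ℝ u₁ x = fderiv ℝ u x := fun x hx =>
    Filter.EventuallyEq.fderiv_eq (eventually_of_mem (h₁.mem_nhds hx) fun y hy => hequ y hy)
  set c₀ : ℝ := a ^ (-(1/q)) with hc₀
  have hc₀pos : 0 < c₀ := Real.rpow_pos_of_pos hapos _
  have hmem : (∫ x in Ω₁, ‖fderiv ℝ (c₀ • u₁) x‖ ^ (1:ℝ)) ∈ pset N 1 q Ω₁ := by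
    refine ⟨c₀ • u₁, hsm₁.const_smul c₀, hcs₁.smul_left,
      (closure_mono (Function.support_smul_subset_right _ _)).trans hts₁, ?_, rfl⟩
    have habs : ∀ x, |(c₀ • u₁) x| ^ q = c₀ ^ q * |u₁ x| ^ q := fun x => by
      rw [Pi.smul_apply, smul_eq_mul, abs_mul, abs_of_pos hc₀pos,
        Real.mul_rpow hc₀pos.le (abs_nonneg _)]
    simp_rw [habs]
    rw [integral_const_mul]
    have h1 : (∫ x in Ω₁, |u₁ x| ^ q) = a :=
      setIntegral_congr_fun h₁.measurableSet fun x hx => by rw [hequ x hx]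
    rw [h1, hc₀, ← Real.rpow_mul hapos.le, neg_mul, one_div, inv_mul_cancel₀ hq0.ne',
      Real.rpow_neg_one, inv_mul_cancel₀ hapos.ne']
  have hlam : poincare 1 q Ω₁ ≤ ∫ x in Ω₁, ‖fderiv ℝ (c₀ • u₁) x‖ ^ (1:ℝ) :=
    csInf_le (pset_bddBelow h₁.measurableSet) hmem
  have hval : (∫ x in Ω₁, ‖fderiv ℝ (c₀ • u₁) x‖ ^ (1:ℝ)) = c₀ * g := by
    rw [hg]
    simp only [Real.rpow_one]
    rw [← integral_const_mul]
    refine setIntegral_congr_fun h₁.measurableSet fun x hx => ?_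
    rw [show fderiv ℝ (c₀ • u₁) x = c₀ • fderiv ℝ u₁ x from
      fderiv_const_smul (hsm₁.differentiable (by simp) x) c₀,
      heqd x hx, norm_smul]
    simp [abs_of_pos hc₀pos, Real.norm_eq_abs]
  rw [hval] at hlam
  have hrpow_pos : 0 < a ^ (1/q) := Real.rpow_pos_of_pos hapos _
  have hcancel : c₀ * a ^ (1/q) = 1 := by
    rw [hc₀, ← Real.rpow_add hapos, neg_add_cancel, Real.rpow_zero]
  calc poincare 1 q Ω₁ * a ^ (1/q) ≤ (c₀ * g) * a ^ (1/q) :=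
        mul_le_mul_of_nonneg_right hlam hrpow_pos.le
    _ = g * (c₀ * a ^ (1/q)) := by ring
    _ = g := by rw [hcancel, mul_one]

end Core
/-- for disjoint nonempty open sets and `1 ≤ q < N/(N-1)`,
`λ_{1,q}(Ω₁ ∪ Ω₂) = min (λ_{1,q}(Ω₁)) (λ_{1,q}(Ω₂))`. -/
theorem statement_6 (N : ℕ) (Ω₁ Ω₂ : Set (EuclideanSpace ℝ (Fin N)))
    (h₁ : IsOpen Ω₁) (h₂ : IsOpen Ω₂) (hne₁ : Ω₁.Nonempty) (hne₂ : Ω₂.Nonempty)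
    (hdisj : Disjoint Ω₁ Ω₂) (q : ℝ) (hq : 1 ≤ q) (hq' : q * ((N : ℝ) - 1) < N) :
    poincare 1 q (Ω₁ ∪ Ω₂) = min (poincare 1 q Ω₁) (poincare 1 q Ω₂) := by
  have hq0 : 0 < q := lt_of_lt_of_le one_pos hq
  have hmeasU : MeasurableSet (Ω₁ ∪ Ω₂) := (h₁.union h₂).measurableSet
  have hsub₁ : pset N 1 q Ω₁ ⊆ pset N 1 q (Ω₁ ∪ Ω₂) := pset_union_subset hq0 h₂ hdisj
  have hsub₂ : pset N 1 q Ω₂ ⊆ pset N 1 q (Ω₁ ∪ Ω₂) := by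
    rw [Set.union_comm]
    exact pset_union_subset hq0 h₁ hdisj.symm
  rw [poincare_eq, poincare_eq, poincare_eq]
  refine le_antisymm (le_min ?_ ?_) ?_
  · exact csInf_le_csInf (pset_bddBelow hmeasU) (pset_nonempty hq0 h₁ hne₁) hsub₁
  · exact csInf_le_csInf (pset_bddBelow hmeasU) (pset_nonempty hq0 h₂ hne₂) hsub₂
  · refine le_csInf (pset_nonempty hq0 (h₁.union h₂) (hne₁.mono subset_union_left)) ?_
    rintro r ⟨u, hsm, hcs, hts, hnorm, rfl⟩
    set a₁ := ∫ x in Ω₁, |u x| ^ q with ha₁def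
    set a₂ := ∫ x in Ω₂, |u x| ^ q with ha₂def
    have ha₁ : 0 ≤ a₁ :=
      setIntegral_nonneg h₁.measurableSet fun x _ => Real.rpow_nonneg (abs_nonneg _) q
    have ha₂ : 0 ≤ a₂ :=
      setIntegral_nonneg h₂.measurableSet fun x _ => Real.rpow_nonneg (abs_nonneg _) q
    have hsplit : a₁ + a₂ = 1 := by
      rw [← hnorm, setIntegral_union hdisj h₂.measurableSet
        (integrable_abs_rpow hq0 hsm hcs).integrableOn
        (integrable_abs_rpow hq0 hsm hcs).integrableOn]
    have hgsplit : (∫ x in Ω₁ ∪ Ω₂, ‖fderiv ℝ u x‖ ^ (1:ℝ))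
        = (∫ x in Ω₁, ‖fderiv ℝ u x‖ ^ (1:ℝ)) + ∫ x in Ω₂, ‖fderiv ℝ u x‖ ^ (1:ℝ) :=
      setIntegral_union hdisj h₂.measurableSet
        (integrable_norm_fderiv hsm hcs).integrableOn
        (integrable_norm_fderiv hsm hcs).integrableOn
    have k₁ := part_bound hq h₁ h₂ hdisj hsm hcs hts
    have k₂ := part_bound hq h₂ h₁ hdisj.symm hsm hcs (by rwa [Set.union_comm] at hts)
    rw [← poincare_eq, ← poincare_eq]
    set m := min (poincare 1 q Ω₁) (poincare 1 q Ω₂) with hm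
    have hm0 : 0 ≤ m :=
      le_min (poincare_nonneg h₁.measurableSet) (poincare_nonneg h₂.measurableSet)
    have hconc : (1:ℝ) ≤ a₁ ^ (1/q) + a₂ ^ (1/q) := by
      have h := real_rpow_add_le ha₁ ha₂ (by positivity) ((div_le_one hq0).2 hq)
      rwa [hsplit, Real.one_rpow] at h
    have hp₁ : 0 ≤ a₁ ^ (1/q) := Real.rpow_nonneg ha₁ _
    have hp₂ : 0 ≤ a₂ ^ (1/q) := Real.rpow_nonneg ha₂ _
    calc m = m * 1 := (mul_one m).symm
      _ ≤ m * (a₁ ^ (1/q) + a₂ ^ (1/q)) := mul_le_mul_of_nonneg_left hconc hm0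
      _ = m * a₁ ^ (1/q) + m * a₂ ^ (1/q) := mul_add _ _ _
      _ ≤ poincare 1 q Ω₁ * a₁ ^ (1/q) + poincare 1 q Ω₂ * a₂ ^ (1/q) :=
          add_le_add (mul_le_mul_of_nonneg_right (min_le_left _ _) hp₁)
            (mul_le_mul_of_nonneg_right (min_le_right _ _) hp₂)
      _ ≤ (∫ x in Ω₁, ‖fderiv ℝ u x‖ ^ (1:ℝ)) + ∫ x in Ω₂, ‖fderiv ℝ u x‖ ^ (1:ℝ) :=
          add_le_add k₁ k₂
      _ = ∫ x in Ω₁ ∪ Ω₂, ‖fderiv ℝ u x‖ ^ (1:ℝ) := hgsplit.symm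

end
end

section
/- Let Ω_1, Ω_2 ⊆ ℝ^N be two disjoint nonempty open sets and let 0 < q < 1. If λ_{1,q}(Ω_1) > 0 and λ_{1,q}(Ω_2) > 0, then λ_{1,q}(Ω_1 ∪ Ω_2) = ( (1/λ_{1,q}(Ω_1))^{q/(1-q)} + (1/λ_{1,q}(Ω_2))^{q/(1-q)} )^{(q-1)/q}. If instead λ_{1,q}(Ω_1) = 0 or λ_{1,q}(Ω_2) = 0, then λ_{1,q}(Ω_1 ∪ Ω_2) = 0. -/
open MeasureTheory Set Filter
open scoped ENNReal

noncomputable section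

lemma holder2 {q x1 x2 y1 y2 : ℝ} (hq0 : 0 < q) (hq1 : q < 1)
    (hx1 : 0 ≤ x1) (hx2 : 0 ≤ x2) (hy1 : 0 ≤ y1) (hy2 : 0 ≤ y2) :
    x1 ^ q * y1 ^ (1 - q) + x2 ^ q * y2 ^ (1 - q) ≤ (x1 + x2) ^ q * (y1 + y2) ^ (1 - q) := by
  rcases (eq_or_lt_of_le (by positivity : (0:ℝ) ≤ x1 + x2)) with hX | hX
  · have h1 : x1 = 0 := by linarith
    have h2 : x2 = 0 := by linarith
    simp [h1, h2, Real.zero_rpow hq0.ne']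
  rcases (eq_or_lt_of_le (by positivity : (0:ℝ) ≤ y1 + y2)) with hY | hY
  · have h1 : y1 = 0 := by linarith
    have h2 : y2 = 0 := by linarith
    have : (1:ℝ) - q ≠ 0 := by linarith
    simp [h1, h2, Real.zero_rpow this]
  set X := x1 + x2 with hXdef
  set Y := y1 + y2 with hYdef
  have hq1' : (0:ℝ) ≤ 1 - q := by linarith
  have g1 := Real.geom_mean_le_arith_mean2_weighted hq0.le hq1'
    (div_nonneg hx1 hX.le) (div_nonneg hy1 hY.le) (by ring)
  have g2 := Real.geom_mean_le_arith_mean2_weighted hq0.le hq1'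
    (div_nonneg hx2 hX.le) (div_nonneg hy2 hY.le) (by ring)
  have e1 : (x1/X)^q * (y1/Y)^(1-q) = (x1^q*y1^(1-q))/((X:ℝ)^q*Y^(1-q)) := by
    rw [Real.div_rpow hx1 hX.le, Real.div_rpow hy1 hY.le]; ring
  have e2 : (x2/X)^q * (y2/Y)^(1-q) = (x2^q*y2^(1-q))/((X:ℝ)^q*Y^(1-q)) := by
    rw [Real.div_rpow hx2 hX.le, Real.div_rpow hy2 hY.le]; ring
  have hXq : (0:ℝ) < X ^ q := Real.rpow_pos_of_pos hX _
  have hYq : (0:ℝ) < Y ^ (1-q) := Real.rpow_pos_of_pos hY _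
  rw [e1] at g1; rw [e2] at g2
  have hsum : (x1^q*y1^(1-q))/((X:ℝ)^q*Y^(1-q)) + (x2^q*y2^(1-q))/((X:ℝ)^q*Y^(1-q)) ≤ 1 := by
    have : q * (x1 / X) + (1 - q) * (y1 / Y) + (q * (x2 / X) + (1 - q) * (y2 / Y)) = 1 := by
      field_simp
      ring
    linarith
  rw [← add_div, div_le_one (by positivity)] at hsum
  exact hsum

/-- The lower bound over the simplex. -/
lemma simplex_lower {q l1 l2 t1 t2 : ℝ} (hq0 : 0 < q) (hq1 : q < 1)
    (hl1 : 0 < l1) (hl2 : 0 < l2) (ht1 : 0 ≤ t1) (ht2 : 0 ≤ t2) (hts : t1 + t2 = 1) :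
    ((1 / l1) ^ (q / (1 - q)) + (1 / l2) ^ (q / (1 - q))) ^ ((q - 1) / q)
      ≤ l1 * t1 ^ (1 / q) + l2 * t2 ^ (1 / q) := by
  set A := (1 / l1) ^ (q / (1 - q)) with hA
  set B := (1 / l2) ^ (q / (1 - q)) with hB
  have hApos : 0 < A := Real.rpow_pos_of_pos (by positivity) _
  have hBpos : 0 < B := Real.rpow_pos_of_pos (by positivity) _
  have hS : 0 < A + B := by linarith
  set a1 := l1 * t1 ^ (1 / q) with ha1
  set a2 := l2 * t2 ^ (1 / q) with ha2
  have ha1n : 0 ≤ a1 := by positivity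
  have ha2n : 0 ≤ a2 := by positivity
  -- key: tᵢ = aᵢ^q * (1/λᵢ)^q  and A^{1-q} = (1/l1)^q
  have hq1' : (0:ℝ) < 1 - q := by linarith
  have hrw : ∀ l : ℝ, 0 < l → ((1/l) ^ (q/(1-q))) ^ (1 - q) = (1/l) ^ q := by
    intro l hl
    rw [← Real.rpow_mul (by positivity)]
    congr 1
    field_simp
  have haq : ∀ l t : ℝ, 0 < l → 0 ≤ t → (l * t ^ (1/q)) ^ q = l ^ q * t := by
    intro l t hl ht
    rw [Real.mul_rpow hl.le (Real.rpow_nonneg ht _), ← Real.rpow_mul ht]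
    congr 1
    field_simp
    norm_num
  have ht1e : a1 ^ q * A ^ (1 - q) = t1 := by
    rw [hrw l1 hl1, ha1, haq l1 t1 hl1 ht1]
    rw [mul_comm (l1^q) t1, mul_assoc, ← Real.mul_rpow (by positivity) (by positivity)]
    rw [mul_one_div, div_self hl1.ne', Real.one_rpow, mul_one]
  have ht2e : a2 ^ q * B ^ (1 - q) = t2 := by
    rw [hrw l2 hl2, ha2, haq l2 t2 hl2 ht2]
    rw [mul_comm (l2^q) t2, mul_assoc, ← Real.mul_rpow (by positivity) (by positivity)]
    rw [mul_one_div, div_self hl2.ne', Real.one_rpow, mul_one]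
  have hH : (1:ℝ) ≤ (a1 + a2) ^ q * (A + B) ^ (1 - q) := by
    have := holder2 hq0 hq1 ha1n ha2n hApos.le hBpos.le
    rw [ht1e, ht2e, hts] at this
    exact this
  have key : (A + B) ^ (q - 1) ≤ (a1 + a2) ^ q := by
    have h0 : (0:ℝ) < (A + B) ^ (q - 1) := Real.rpow_pos_of_pos hS _
    calc (A + B) ^ (q - 1) = 1 * (A + B) ^ (q - 1) := (one_mul _).symm
      _ ≤ ((a1 + a2) ^ q * (A + B) ^ (1 - q)) * (A + B) ^ (q - 1) :=
          mul_le_mul_of_nonneg_right hH h0.le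
      _ = (a1 + a2) ^ q * ((A + B) ^ ((1 - q) + (q - 1))) := by
          rw [Real.rpow_add hS]; ring
      _ = (a1 + a2) ^ q := by norm_num
  have := Real.rpow_le_rpow (Real.rpow_pos_of_pos hS _).le key (by positivity : (0:ℝ) ≤ 1/q)
  rw [← Real.rpow_mul hS.le, ← Real.rpow_mul (by positivity)] at this
  have e1 : (q - 1) * (1/q) = (q - 1)/q := by ring
  have e2 : q * (1/q) = 1 := by field_simp
  rw [e1, e2, Real.rpow_one] at this
  exact this

lemma simplex_attain {q l1 l2 : ℝ} (hq0 : 0 < q) (hq1 : q < 1)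
    (hl1 : 0 < l1) (hl2 : 0 < l2) :
    ∃ t : ℝ, 0 ≤ t ∧ t ≤ 1 ∧
      t ^ (1/q) * l1 + (1 - t) ^ (1/q) * l2 =
        ((1 / l1) ^ (q / (1 - q)) + (1 / l2) ^ (q / (1 - q))) ^ ((q - 1) / q) := by
  have hq1' : (0:ℝ) < 1 - q := by linarith
  set A := (1 / l1) ^ (q / (1 - q)) with hA
  set B := (1 / l2) ^ (q / (1 - q)) with hB
  have hApos : 0 < A := Real.rpow_pos_of_pos (by positivity) _
  have hBpos : 0 < B := Real.rpow_pos_of_pos (by positivity) _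
  have hS : 0 < A + B := by linarith
  refine ⟨A / (A + B), by positivity, by rw [div_le_one hS]; linarith, ?_⟩
  have h1mt : 1 - A / (A + B) = B / (A + B) := by field_simp; ring
  have hterm : ∀ l : ℝ, 0 < l →
      ((1/l) ^ (q/(1-q)) / (A+B)) ^ (1/q) * l = (1/l) ^ (q/(1-q)) / (A+B) ^ (1/q) := by
    intro l hl
    have hC : (0:ℝ) < (1/l) ^ (q/(1-q)) := Real.rpow_pos_of_pos (by positivity) _
    rw [Real.div_rpow hC.le hS.le, ← Real.rpow_mul (by positivity)]
    have e1 : q/(1-q) * (1/q) = 1/(1-q) := by field_simp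
    rw [e1]
    have e2 : (1/l:ℝ) ^ (q/(1-q)) = (1/l) ^ (1/(1-q)) / (1/l) := by
      rw [show q/(1-q) = 1/(1-q) - 1 by field_simp; ring, Real.rpow_sub (by positivity),
        Real.rpow_one]
    rw [e2]
    field_simp
  rw [h1mt, ← hA, ← hB] at *
  rw [hterm l1 hl1, hterm l2 hl2, ← hA, ← hB, ← add_div]
  rw [show (q-1)/q = 1 - 1/q by field_simp, Real.rpow_sub hS, Real.rpow_one]

/-- The set whose infimum defines `poincare 1 q Ω`. -/
def pcSet {N : ℕ} (q : ℝ) (Ω : Set (EuclideanSpace ℝ (Fin N))) : Set ℝ :=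
  { r : ℝ | ∃ u : EuclideanSpace ℝ (Fin N) → ℝ, ContDiff ℝ (⊤ : ℕ∞) u ∧
    HasCompactSupport u ∧ tsupport u ⊆ Ω ∧
    (∫ x in Ω, |u x| ^ q) = 1 ∧ r = ∫ x in Ω, ‖fderiv ℝ u x‖ ^ (1:ℝ) }

lemma poincare_one_eq {N : ℕ} (q : ℝ) (Ω : Set (EuclideanSpace ℝ (Fin N))) :
    poincare 1 q Ω = sInf (pcSet q Ω) := rfl

section Helpers

variable {N : ℕ} {q : ℝ}

lemma integrable_absq (hq0 : 0 < q) {u : EuclideanSpace ℝ (Fin N) → ℝ}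
    (hu : Continuous u) (hcs : HasCompactSupport u) :
    Integrable (fun x => |u x| ^ q) := by
  apply Continuous.integrable_of_hasCompactSupport
  · exact (Real.continuous_rpow_const hq0.le).comp hu.abs
  · exact hcs.comp_left (g := fun y : ℝ => |y| ^ q) (by simp [Real.zero_rpow hq0.ne'])

lemma integrable_gradnorm {u : EuclideanSpace ℝ (Fin N) → ℝ}
    (hu : ContDiff ℝ (⊤ : ℕ∞) u) (hcs : HasCompactSupport u) :
    Integrable (fun x => ‖fderiv ℝ u x‖) := by
  apply Continuous.integrable_of_hasCompactSupport
  · exact (hu.continuous_fderiv (by simp)).norm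
  · exact (hcs.fderiv ℝ).comp_left (g := fun L => ‖L‖) norm_zero

lemma vanish_on {Ω' : Set (EuclideanSpace ℝ (Fin N))} (hΩ' : IsOpen Ω')
    {u : EuclideanSpace ℝ (Fin N) → ℝ} (hd : Disjoint Ω' (tsupport u)) :
    ∀ x ∈ Ω', u x = 0 ∧ fderiv ℝ u x = 0 := by
  intro x hx
  have hev : u =ᶠ[nhds x] (fun _ => (0:ℝ)) :=
    Filter.eventually_of_mem (hΩ'.mem_nhds hx)
      (fun y hy => image_eq_zero_of_notMem_tsupport (disjoint_left.1 hd hy))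
  refine ⟨hev.self_of_nhds, ?_⟩
  rw [hev.fderiv_eq, fderiv_fun_const]
  rfl

lemma pcSet_nonneg {Ω : Set (EuclideanSpace ℝ (Fin N))} {r : ℝ} (hr : r ∈ pcSet q Ω) :
    0 ≤ r := by
  obtain ⟨u, -, -, -, -, rfl⟩ := hr
  apply integral_nonneg
  intro x
  positivity

lemma pcSet_bddBelow (Ω : Set (EuclideanSpace ℝ (Fin N))) : BddBelow (pcSet q Ω) :=
  ⟨0, fun _ hr => pcSet_nonneg hr⟩

lemma pcSet_nonempty (hq0 : 0 < q) {Ω : Set (EuclideanSpace ℝ (Fin N))}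
    (hΩ : IsOpen Ω) (hne : Ω.Nonempty) : (pcSet q Ω).Nonempty := by
  obtain ⟨x₀, hx₀⟩ := hne
  obtain ⟨r, hr, hball⟩ := Metric.isOpen_iff.1 hΩ x₀ hx₀
  set φ : ContDiffBump x₀ := ⟨r/4, r/2, by positivity, by linarith⟩ with hφ
  have hts : tsupport φ ⊆ Ω := by
    rw [φ.tsupport_eq]
    exact (Metric.closedBall_subset_ball (by simp [hφ]; linarith)).trans hball
  have hcs : HasCompactSupport φ := φ.hasCompactSupport
  have hgc : Continuous (fun x => |φ x| ^ q) :=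
    (Real.continuous_rpow_const hq0.le).comp φ.continuous.abs
  have hgi : IntegrableOn (fun x => |φ x| ^ q) Ω := (integrable_absq hq0 φ.continuous hcs).integrableOn
  set I := ∫ x in Ω, |φ x| ^ q with hI
  have hIpos : 0 < I := by
    have hsub : Metric.ball x₀ (r/4) ⊆ Ω := by
      refine subset_trans (Metric.ball_subset_ball (by linarith)) hball
    have h1 : ∫ x in Metric.ball x₀ (r/4), |φ x| ^ q
        = (volume (Metric.ball x₀ (r/4))).toReal := by
      rw [setIntegral_congr_fun measurableSet_ball
        (fun x hx => ?_)]
      · rw [setIntegral_const, smul_eq_mul, mul_one]; rfl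
      · have h1 : φ x = 1 := φ.one_of_mem_closedBall (Metric.ball_subset_closedBall hx)
        rw [h1]; norm_num
    have h2 : ∫ x in Metric.ball x₀ (r/4), |φ x| ^ q ≤ I := by
      apply setIntegral_mono_set hgi
      · filter_upwards with x using by positivity
      · exact hsub.eventuallyLE
    have h3 : 0 < (volume (Metric.ball x₀ (r/4))).toReal := by
      refine ENNReal.toReal_pos ?_ measure_ball_lt_top.ne
      exact (Metric.measure_ball_pos volume x₀ (by positivity)).ne'
    linarith [h1 ▸ h2]
  set c : ℝ := (1/I) ^ (1/q) with hc
  have hcpos : 0 < c := Real.rpow_pos_of_pos (by positivity) _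
  refine ⟨_, fun x => c * φ x, contDiff_const.mul φ.contDiff,
    ?_, ?_, ?_, rfl⟩
  · exact HasCompactSupport.mul_left hcs
  · refine subset_trans (closure_mono ?_) hts
    intro x hx
    rw [Function.mem_support] at hx
    have hφx : (φ : EuclideanSpace ℝ (Fin N) → ℝ) x ≠ 0 := fun h => hx (by rw [h, mul_zero])
    exact hφx
  · have heq : ∀ x, |c * φ x| ^ q = c ^ q * |φ x| ^ q := by
      intro x
      rw [abs_mul, abs_of_pos hcpos, Real.mul_rpow hcpos.le (abs_nonneg _)]
    simp only [heq]
    rw [integral_const_mul, ← hI, hc, ← Real.rpow_mul (by positivity),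
      one_div_mul_cancel hq0.ne', Real.rpow_one]
    field_simp

lemma fderiv_congr_on {Ω' : Set (EuclideanSpace ℝ (Fin N))} (hΩ' : IsOpen Ω')
    {u v : EuclideanSpace ℝ (Fin N) → ℝ} (h : ∀ y ∈ Ω', u y = v y)
    {x : EuclideanSpace ℝ (Fin N)} (hx : x ∈ Ω') :
    fderiv ℝ u x = fderiv ℝ v x :=
  Filter.EventuallyEq.fderiv_eq (Filter.eventually_of_mem (hΩ'.mem_nhds hx) h)

lemma pcSet_subset_union (hq0 : 0 < q) {Ω₁ Ω₂ : Set (EuclideanSpace ℝ (Fin N))}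
    (h₂ : IsOpen Ω₂) (hd : Disjoint Ω₁ Ω₂) :
    pcSet q Ω₁ ⊆ pcSet q (Ω₁ ∪ Ω₂) := by
  rintro r ⟨u, hsm, hcs, hsupp, hnorm, rfl⟩
  have hv := vanish_on h₂ (u := u) (hd.symm.mono_right hsupp)
  have hi1 : IntegrableOn (fun x => |u x| ^ q) Ω₁ :=
    (integrable_absq hq0 hsm.continuous hcs).integrableOn
  have hi2 : IntegrableOn (fun x => |u x| ^ q) Ω₂ :=
    (integrable_absq hq0 hsm.continuous hcs).integrableOn
  have hg : Integrable (fun x => ‖fderiv ℝ u x‖ ^ (1:ℝ)) := by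
    simp only [Real.rpow_one]; exact integrable_gradnorm hsm hcs
  refine ⟨u, hsm, hcs, hsupp.trans subset_union_left, ?_, ?_⟩
  · rw [setIntegral_union hd h₂.measurableSet hi1 hi2, hnorm]
    have h0 : ∫ x in Ω₂, |u x| ^ q = 0 := by
      calc ∫ x in Ω₂, |u x| ^ q = ∫ _x in Ω₂, (0:ℝ) :=
            setIntegral_congr_fun h₂.measurableSet
              (fun x hx => by rw [(hv x hx).1]; simp [Real.zero_rpow hq0.ne'])
        _ = 0 := by simp
    rw [h0, add_zero]
  · rw [setIntegral_union hd h₂.measurableSet hg.integrableOn hg.integrableOn]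
    have h0 : ∫ x in Ω₂, ‖fderiv ℝ u x‖ ^ (1:ℝ) = 0 := by
      calc ∫ x in Ω₂, ‖fderiv ℝ u x‖ ^ (1:ℝ) = ∫ _x in Ω₂, (0:ℝ) :=
            setIntegral_congr_fun h₂.measurableSet
              (fun x hx => by rw [(hv x hx).2]; simp)
        _ = 0 := by simp
    rw [h0, add_zero]

lemma pcSet_combine (hq0 : 0 < q) {Ω₁ Ω₂ : Set (EuclideanSpace ℝ (Fin N))}
    (h₁ : IsOpen Ω₁) (h₂ : IsOpen Ω₂) (hd : Disjoint Ω₁ Ω₂)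
    {r₁ r₂ t : ℝ} (ht0 : 0 ≤ t) (ht1 : t ≤ 1)
    (hr₁ : r₁ ∈ pcSet q Ω₁) (hr₂ : r₂ ∈ pcSet q Ω₂) :
    t ^ (1/q) * r₁ + (1 - t) ^ (1/q) * r₂ ∈ pcSet q (Ω₁ ∪ Ω₂) := by
  obtain ⟨u₁, hsm1, hcs1, hsupp1, hnorm1, rfl⟩ := hr₁
  obtain ⟨u₂, hsm2, hcs2, hsupp2, hnorm2, rfl⟩ := hr₂
  have ht1' : (0:ℝ) ≤ 1 - t := by linarith
  set a := t ^ (1/q) with haDef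
  set b := (1-t) ^ (1/q) with hbDef
  have ha : 0 ≤ a := Real.rpow_nonneg ht0 _
  have hb : 0 ≤ b := Real.rpow_nonneg ht1' _
  have haq : a ^ q = t := by
    rw [haDef, ← Real.rpow_mul ht0, one_div_mul_cancel hq0.ne', Real.rpow_one]
  have hbq : b ^ q = 1 - t := by
    rw [hbDef, ← Real.rpow_mul ht1', one_div_mul_cancel hq0.ne', Real.rpow_one]
  set u := fun x => a * u₁ x + b * u₂ x with huDef
  have hv1 : ∀ x ∈ Ω₁, u₂ x = 0 ∧ fderiv ℝ u₂ x = 0 := vanish_on h₁ (hd.mono_right hsupp2)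
  have hv2 : ∀ x ∈ Ω₂, u₁ x = 0 ∧ fderiv ℝ u₁ x = 0 :=
    vanish_on h₂ (hd.symm.mono_right hsupp1)
  have hsm : ContDiff ℝ (⊤:ℕ∞) u := (contDiff_const.mul hsm1).add (contDiff_const.mul hsm2)
  have hcs : HasCompactSupport u := (hcs1.mul_left).add (hcs2.mul_left)
  have hts : tsupport u ⊆ Ω₁ ∪ Ω₂ := by
    refine subset_trans (closure_minimal ?_
      ((isClosed_tsupport u₁).union (isClosed_tsupport u₂)))
      (union_subset_union hsupp1 hsupp2)
    intro x hx
    rw [Function.mem_support] at hx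
    by_contra hmem
    simp only [mem_union, not_or] at hmem
    refine hx ?_
    rw [huDef]
    simp only [image_eq_zero_of_notMem_tsupport hmem.1, image_eq_zero_of_notMem_tsupport hmem.2,
      mul_zero, add_zero]
  have hu_eq1 : ∀ x ∈ Ω₁, |u x| ^ q = a ^ q * |u₁ x| ^ q := by
    intro x hx
    show |a * u₁ x + b * u₂ x| ^ q = _
    rw [(hv1 x hx).1, mul_zero, add_zero, abs_mul, abs_of_nonneg ha,
      Real.mul_rpow ha (abs_nonneg _)]
  have hu_eq2 : ∀ x ∈ Ω₂, |u x| ^ q = b ^ q * |u₂ x| ^ q := by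
    intro x hx
    show |a * u₁ x + b * u₂ x| ^ q = _
    rw [(hv2 x hx).1, mul_zero, zero_add, abs_mul, abs_of_nonneg hb,
      Real.mul_rpow hb (abs_nonneg _)]
  have hgrad1 : ∀ x ∈ Ω₁, ‖fderiv ℝ u x‖ = a * ‖fderiv ℝ u₁ x‖ := by
    intro x hx
    have hfe : fderiv ℝ u x = a • fderiv ℝ u₁ x := by
      have h1 : fderiv ℝ u x = fderiv ℝ (fun y => a * u₁ y) x :=
        fderiv_congr_on h₁ (fun y hy => by
          show a * u₁ y + b * u₂ y = a * u₁ y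
          rw [(hv1 y hy).1, mul_zero, add_zero]) hx
      rw [h1, fderiv_const_mul (hsm1.differentiable (by simp)).differentiableAt]
    rw [hfe, norm_smul, Real.norm_eq_abs, abs_of_nonneg ha]
  have hgrad2 : ∀ x ∈ Ω₂, ‖fderiv ℝ u x‖ = b * ‖fderiv ℝ u₂ x‖ := by
    intro x hx
    have hfe : fderiv ℝ u x = b • fderiv ℝ u₂ x := by
      have h1 : fderiv ℝ u x = fderiv ℝ (fun y => b * u₂ y) x :=
        fderiv_congr_on h₂ (fun y hy => by
          show a * u₁ y + b * u₂ y = b * u₂ y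
          rw [(hv2 y hy).1, mul_zero, zero_add]) hx
      rw [h1, fderiv_const_mul (hsm2.differentiable (by simp)).differentiableAt]
    rw [hfe, norm_smul, Real.norm_eq_abs, abs_of_nonneg hb]
  have hi : Integrable (fun x => |u x| ^ q) := integrable_absq hq0 hsm.continuous hcs
  have hg : Integrable (fun x => ‖fderiv ℝ u x‖ ^ (1:ℝ)) := by
    simp only [Real.rpow_one]; exact integrable_gradnorm hsm hcs
  refine ⟨u, hsm, hcs, hts, ?_, ?_⟩
  · rw [setIntegral_union hd h₂.measurableSet hi.integrableOn hi.integrableOn]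
    have e1 : ∫ x in Ω₁, |u x| ^ q = t := by
      rw [setIntegral_congr_fun h₁.measurableSet (fun x hx => hu_eq1 x hx),
        integral_const_mul, hnorm1, mul_one, haq]
    have e2 : ∫ x in Ω₂, |u x| ^ q = 1 - t := by
      rw [setIntegral_congr_fun h₂.measurableSet (fun x hx => hu_eq2 x hx),
        integral_const_mul, hnorm2, mul_one, hbq]
    rw [e1, e2]; ring
  · rw [setIntegral_union hd h₂.measurableSet hg.integrableOn hg.integrableOn]
    simp only [Real.rpow_one]
    have e1 : ∫ x in Ω₁, ‖fderiv ℝ u x‖ = a * ∫ x in Ω₁, ‖fderiv ℝ u₁ x‖ := by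
      rw [setIntegral_congr_fun h₁.measurableSet (fun x hx => hgrad1 x hx), integral_const_mul]
    have e2 : ∫ x in Ω₂, ‖fderiv ℝ u x‖ = b * ∫ x in Ω₂, ‖fderiv ℝ u₂ x‖ := by
      rw [setIntegral_congr_fun h₂.measurableSet (fun x hx => hgrad2 x hx), integral_const_mul]
    rw [e1, e2]

lemma indicator_pieces {Ω₁ Ω₂ : Set (EuclideanSpace ℝ (Fin N))} (h₁ : IsOpen Ω₁)
    (h₂ : IsOpen Ω₂) (hd : Disjoint Ω₁ Ω₂) {u : EuclideanSpace ℝ (Fin N) → ℝ}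
    (hu : ContDiff ℝ (⊤:ℕ∞) u) (hcs : HasCompactSupport u)
    (hsupp : tsupport u ⊆ Ω₁ ∪ Ω₂) :
    ContDiff ℝ (⊤:ℕ∞) (Ω₁.indicator u) ∧ HasCompactSupport (Ω₁.indicator u) ∧
      tsupport (Ω₁.indicator u) ⊆ Ω₁ := by
  set K := tsupport u ∩ Ω₂ᶜ with hK
  have hKc : IsCompact K := IsCompact.inter_right hcs (isClosed_compl_iff.2 h₂)
  have hKsub : K ⊆ Ω₁ := fun x hx => (hsupp hx.1).resolve_right (fun h => hx.2 h)
  have hsupp1 : Function.support (Ω₁.indicator u) ⊆ K := by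
    intro x hx
    rw [Function.mem_support] at hx
    by_cases h : x ∈ Ω₁
    · rw [indicator_of_mem h] at hx
      exact ⟨subset_tsupport u hx, disjoint_left.1 hd h⟩
    · rw [indicator_of_notMem h] at hx; exact absurd rfl hx
  have hts : tsupport (Ω₁.indicator u) ⊆ Ω₁ :=
    (closure_minimal hsupp1 hKc.isClosed).trans hKsub
  have hzero : ∀ x ∉ K, Ω₁.indicator u x = 0 := by
    intro x hx
    by_cases h : x ∈ Ω₁
    · rw [indicator_of_mem h]
      have hxt : x ∉ tsupport u := fun hxt => hx ⟨hxt, disjoint_left.1 hd h⟩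
      exact image_eq_zero_of_notMem_tsupport hxt
    · exact indicator_of_notMem h u
  have hsm : ContDiff ℝ (⊤:ℕ∞) (Ω₁.indicator u) := by
    rw [contDiff_iff_contDiffAt]
    intro x
    by_cases h : x ∈ Ω₁
    · exact hu.contDiffAt.congr_of_eventuallyEq
        (Filter.eventually_of_mem (h₁.mem_nhds h) (fun y hy => indicator_of_mem hy u))
    · have hxK : x ∉ K := fun hxK => h (hKsub hxK)
      exact (contDiffAt_const (c := (0:ℝ))).congr_of_eventuallyEq
        (Filter.eventually_of_mem (hKc.isClosed.isOpen_compl.mem_nhds hxK)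
          (fun y hy => hzero y hy))
  exact ⟨hsm, HasCompactSupport.intro hKc hzero, hts⟩

lemma pcSet_piece_bound (hq0 : 0 < q) {Ω₁ Ω₂ : Set (EuclideanSpace ℝ (Fin N))}
    (h₁ : IsOpen Ω₁) (h₂ : IsOpen Ω₂) (hd : Disjoint Ω₁ Ω₂)
    {u : EuclideanSpace ℝ (Fin N) → ℝ} (hu : ContDiff ℝ (⊤:ℕ∞) u)
    (hcs : HasCompactSupport u) (hsupp : tsupport u ⊆ Ω₁ ∪ Ω₂) :
    sInf (pcSet q Ω₁) * (∫ x in Ω₁, |u x| ^ q) ^ (1/q) ≤ ∫ x in Ω₁, ‖fderiv ℝ u x‖ := by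
  set t := ∫ x in Ω₁, |u x| ^ q with ht
  have htn : 0 ≤ t := integral_nonneg (fun x => by positivity)
  have hEn : 0 ≤ ∫ x in Ω₁, ‖fderiv ℝ u x‖ := integral_nonneg (fun x => norm_nonneg _)
  rcases eq_or_lt_of_le htn with h0 | hpos
  · rw [← h0, Real.zero_rpow (by positivity : (1:ℝ)/q ≠ 0), mul_zero]
    exact hEn
  · obtain ⟨hsm', hcs', hts'⟩ := indicator_pieces h₁ h₂ hd hu hcs hsupp
    set c := (1/t) ^ (1/q) with hc
    have hcpos : 0 < c := Real.rpow_pos_of_pos (by positivity) _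
    set v := fun x => c * Ω₁.indicator u x with hvDef
    have hsmv : ContDiff ℝ (⊤:ℕ∞) v := contDiff_const.mul hsm'
    have hcsv : HasCompactSupport v := hcs'.mul_left
    have htsv : tsupport v ⊆ Ω₁ := by
      refine subset_trans (closure_mono ?_) hts'
      intro x hx
      rw [Function.mem_support] at hx ⊢
      exact fun h => hx (by rw [hvDef]; simp only [h, mul_zero])
    have hnormv : (∫ x in Ω₁, |v x| ^ q) = 1 := by
      have heq : ∀ x ∈ Ω₁, |v x| ^ q = (1/t) * |u x| ^ q := by
        intro x hx
        show |c * Ω₁.indicator u x| ^ q = _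
        rw [indicator_of_mem hx, abs_mul, abs_of_pos hcpos,
          Real.mul_rpow hcpos.le (abs_nonneg _), hc, ← Real.rpow_mul (by positivity),
          one_div_mul_cancel hq0.ne', Real.rpow_one]
      rw [setIntegral_congr_fun h₁.measurableSet heq, integral_const_mul, ← ht]
      field_simp
    have hmem : (∫ x in Ω₁, ‖fderiv ℝ v x‖ ^ (1:ℝ)) ∈ pcSet q Ω₁ :=
      ⟨v, hsmv, hcsv, htsv, hnormv, rfl⟩
    have hle := csInf_le (pcSet_bddBelow Ω₁) hmem
    have hEeq : ∫ x in Ω₁, ‖fderiv ℝ v x‖ ^ (1:ℝ) = c * ∫ x in Ω₁, ‖fderiv ℝ u x‖ := by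
      simp only [Real.rpow_one]
      have heq : ∀ x ∈ Ω₁, ‖fderiv ℝ v x‖ = c * ‖fderiv ℝ u x‖ := by
        intro x hx
        have hfe : fderiv ℝ v x = c • fderiv ℝ u x := by
          have hh : fderiv ℝ v x = fderiv ℝ (fun y => c * u y) x :=
            fderiv_congr_on h₁ (fun y hy => by
              show c * Ω₁.indicator u y = c * u y
              rw [indicator_of_mem hy]) hx
          rw [hh, fderiv_const_mul (hu.differentiable (by simp)).differentiableAt]
        rw [hfe, norm_smul, Real.norm_eq_abs, abs_of_pos hcpos]
      rw [setIntegral_congr_fun h₁.measurableSet heq, integral_const_mul]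
    rw [hEeq] at hle
    have hct : c * t ^ (1/q) = 1 := by
      rw [hc, ← Real.mul_rpow (by positivity) htn, one_div_mul_cancel hpos.ne',
        Real.one_rpow]
    calc sInf (pcSet q Ω₁) * t ^ (1/q)
        ≤ (c * ∫ x in Ω₁, ‖fderiv ℝ u x‖) * t ^ (1/q) :=
          mul_le_mul_of_nonneg_right hle (Real.rpow_nonneg htn _)
      _ = (c * t ^ (1/q)) * ∫ x in Ω₁, ‖fderiv ℝ u x‖ := by ring
      _ = ∫ x in Ω₁, ‖fderiv ℝ u x‖ := by rw [hct, one_mul]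

end Helpers

/-- for disjoint nonempty open sets and `0 < q < 1`: if both
`λ_{1,q}(Ω₁) > 0` and `λ_{1,q}(Ω₂) > 0` then
`λ_{1,q}(Ω₁ ∪ Ω₂) = ((1/λ_{1,q}(Ω₁))^{q/(1-q)} + (1/λ_{1,q}(Ω₂))^{q/(1-q)})^{(q-1)/q}`;
if `λ_{1,q}(Ω₁) = 0` or `λ_{1,q}(Ω₂) = 0` then `λ_{1,q}(Ω₁ ∪ Ω₂) = 0`. -/
theorem statement_7 (N : ℕ) (Ω₁ Ω₂ : Set (EuclideanSpace ℝ (Fin N)))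
    (h₁ : IsOpen Ω₁) (h₂ : IsOpen Ω₂) (hne₁ : Ω₁.Nonempty) (hne₂ : Ω₂.Nonempty)
    (hdisj : Disjoint Ω₁ Ω₂) (q : ℝ) (hq0 : 0 < q) (hq1 : q < 1) :
    (0 < poincare 1 q Ω₁ → 0 < poincare 1 q Ω₂ →
      poincare 1 q (Ω₁ ∪ Ω₂) =
        ((1 / poincare 1 q Ω₁) ^ (q / (1 - q)) +
            (1 / poincare 1 q Ω₂) ^ (q / (1 - q))) ^ ((q - 1) / q)) ∧
    (poincare 1 q Ω₁ = 0 ∨ poincare 1 q Ω₂ = 0 → poincare 1 q (Ω₁ ∪ Ω₂) = 0) := by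
  have hpe : ∀ Ω : Set (EuclideanSpace ℝ (Fin N)), poincare 1 q Ω = sInf (pcSet q Ω) :=
    fun Ω => rfl
  have hne₁₂ : (Ω₁ ∪ Ω₂).Nonempty := hne₁.mono subset_union_left
  have hle1 : poincare 1 q (Ω₁ ∪ Ω₂) ≤ poincare 1 q Ω₁ := by
    rw [hpe, hpe]
    exact csInf_le_csInf (pcSet_bddBelow _) (pcSet_nonempty hq0 h₁ hne₁)
      (pcSet_subset_union hq0 h₂ hdisj)
  have hle2 : poincare 1 q (Ω₁ ∪ Ω₂) ≤ poincare 1 q Ω₂ := by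
    rw [hpe, hpe, show Ω₁ ∪ Ω₂ = Ω₂ ∪ Ω₁ from union_comm _ _]
    exact csInf_le_csInf (pcSet_bddBelow _) (pcSet_nonempty hq0 h₂ hne₂)
      (pcSet_subset_union hq0 h₁ hdisj.symm)
  have hnonneg : 0 ≤ poincare 1 q (Ω₁ ∪ Ω₂) := by
    rw [hpe]
    exact Real.sInf_nonneg (fun r hr => pcSet_nonneg hr)
  constructor
  · intro hp1 hp2
    apply le_antisymm
    · -- upper bound
      obtain ⟨t, ht0, ht1, hteq⟩ := simplex_attain hq0 hq1 hp1 hp2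
      rw [← hteq]
      set a := t ^ (1/q) with haDef
      set b := (1-t) ^ (1/q) with hbDef
      have ha0 : 0 ≤ a := Real.rpow_nonneg ht0 _
      have hb0 : 0 ≤ b := Real.rpow_nonneg (by linarith) _
      have ha1 : a ≤ 1 := Real.rpow_le_one ht0 ht1 (by positivity)
      have hb1 : b ≤ 1 := Real.rpow_le_one (by linarith) (by linarith) (by positivity)
      refine le_of_forall_pos_le_add ?_
      intro ε hε
      obtain ⟨r₁, hr₁mem, hr₁lt⟩ := exists_lt_of_csInf_lt (pcSet_nonempty hq0 h₁ hne₁)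
        (lt_add_of_pos_right (sInf (pcSet q Ω₁)) (half_pos hε))
      obtain ⟨r₂, hr₂mem, hr₂lt⟩ := exists_lt_of_csInf_lt (pcSet_nonempty hq0 h₂ hne₂)
        (lt_add_of_pos_right (sInf (pcSet q Ω₂)) (half_pos hε))
      have hmem := pcSet_combine hq0 h₁ h₂ hdisj ht0 ht1 hr₁mem hr₂mem
      have hkey : poincare 1 q (Ω₁ ∪ Ω₂) ≤ a * r₁ + b * r₂ := by
        rw [hpe]
        exact csInf_le (pcSet_bddBelow _) hmem
      have h1 : a * r₁ ≤ a * (poincare 1 q Ω₁ + ε/2) := by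
        apply mul_le_mul_of_nonneg_left _ ha0
        rw [hpe]; exact hr₁lt.le
      have h2 : b * r₂ ≤ b * (poincare 1 q Ω₂ + ε/2) := by
        apply mul_le_mul_of_nonneg_left _ hb0
        rw [hpe]; exact hr₂lt.le
      nlinarith
    · -- lower bound
      simp only [hpe]
      apply le_csInf (pcSet_nonempty hq0 (h₁.union h₂) hne₁₂)
      rintro r ⟨u, hsm, hcs, hsupp, hnorm, rfl⟩
      have hi : Integrable (fun x => |u x| ^ q) := integrable_absq hq0 hsm.continuous hcs
      have hg : Integrable (fun x => ‖fderiv ℝ u x‖ ^ (1:ℝ)) := by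
        simp only [Real.rpow_one]; exact integrable_gradnorm hsm hcs
      set t1 := ∫ x in Ω₁, |u x| ^ q with ht1
      set t2 := ∫ x in Ω₂, |u x| ^ q with ht2
      have ht1n : 0 ≤ t1 := integral_nonneg (fun x => by positivity)
      have ht2n : 0 ≤ t2 := integral_nonneg (fun x => by positivity)
      have hsplit : t1 + t2 = 1 := by
        rw [ht1, ht2, ← setIntegral_union hdisj h₂.measurableSet hi.integrableOn
          hi.integrableOn, hnorm]
      have hb1 := pcSet_piece_bound hq0 h₁ h₂ hdisj hsm hcs hsupp
      have hb2 := pcSet_piece_bound hq0 h₂ h₁ hdisj.symm hsm hcs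
        (by rwa [union_comm])
      have hrsplit : (∫ x in Ω₁ ∪ Ω₂, ‖fderiv ℝ u x‖ ^ (1:ℝ))
          = (∫ x in Ω₁, ‖fderiv ℝ u x‖) + ∫ x in Ω₂, ‖fderiv ℝ u x‖ := by
        rw [setIntegral_union hdisj h₂.measurableSet hg.integrableOn hg.integrableOn]
        simp only [Real.rpow_one]
      have hlow := simplex_lower hq0 hq1 hp1 hp2 ht1n ht2n hsplit
      rw [hrsplit]
      rw [hpe, hpe] at hlow
      linarith
  · intro h0
    rcases h0 with h | h
    · rw [h] at hle1; linarith
    · rw [h] at hle2; linarith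

end
end

section
/- Let Ω ⊆ ℝ² be an unbounded open convex set with finite inradius r_Ω < ∞ and nonempty high ridge set M(Ω) ≠ ∅. Then, up to a rigid motion of the plane, one has [0, ∞) × (-r_Ω, r_Ω) ⊆ Ω ⊆ ℝ × (-r_Ω, r_Ω). -/
open MeasureTheory Set Filter
open scoped ENNReal RealInnerProductSpace

set_option maxHeartbeats 1000000

noncomputable section

namespace Statement14Aux

local notation "E2" => EuclideanSpace ℝ (Fin 2)

lemma ball_le_inradius {Ω : Set E2} (hfin : einradius Ω < ⊤)
    {c : E2} {ρ : ℝ} (h : Metric.ball c ρ ⊆ Ω) : ρ ≤ inradius Ω := by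
  rcases le_or_gt ρ 0 with h0 | h0
  · exact h0.trans ENNReal.toReal_nonneg
  · have hc : c ∈ Ω := h (Metric.mem_ball_self h0)
    have h1 : ENNReal.ofReal ρ ≤ EMetric.infEdist c Ωᶜ := by
      refine EMetric.le_infEdist.2 ?_
      intro z hz
      rw [edist_dist]
      apply ENNReal.ofReal_le_ofReal
      by_contra hlt
      push_neg at hlt
      exact hz (h (by rwa [Metric.mem_ball, dist_comm]))
    have h2 : ENNReal.ofReal ρ ≤ einradius Ω :=
      h1.trans (le_biSup (f := fun x => EMetric.infEdist x Ωᶜ) hc)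
    calc ρ = (ENNReal.ofReal ρ).toReal := (ENNReal.toReal_ofReal h0.le).symm
    _ ≤ (einradius Ω).toReal := ENNReal.toReal_mono hfin.ne h2

lemma exists_lam' (r ε lam h' ρ R m β : ℝ)
    (hεpos : 0 < ε) (hlam_pos : 0 < lam) (hlam_le : lam ≤ 1/2)
    (hρpos : 0 < ρ) (hh'pos : 0 < h')
    (hgap : m - R + ρ = lam ^ 2 * ε / 8)
    (hgap2 : lam * h' + (1 - lam) * ρ - (m + R) = lam ^ 2 * ε / 8)
    (hβub : β < m + R) (hβlb : m - R < β) :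
    ∃ lam' : ℝ, 0 ≤ lam' ∧ lam' ≤ lam ∧ |β - lam' * h'| < (1 - lam') * ρ := by
  have hl2 : 0 < lam ^ 2 * ε / 8 := by positivity
  rcases lt_or_ge β 0 with hβ0 | hβ0
  · exact ⟨0, le_rfl, hlam_pos.le, by rw [zero_mul, sub_zero, abs_of_neg hβ0]; linarith⟩
  rcases le_or_gt β (lam * h') with hβ1 | hβ1
  · have hble : β / h' ≤ lam := (div_le_iff₀ hh'pos).2 (by linarith)
    refine ⟨β / h', div_nonneg hβ0 hh'pos.le, hble, ?_⟩
    have he : β - (β / h') * h' = 0 := by field_simp; ring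
    rw [he, abs_zero]
    exact mul_pos (by linarith) hρpos
  · refine ⟨lam, hlam_pos.le, le_rfl, ?_⟩
    rw [abs_lt]
    exact ⟨by nlinarith [mul_pos (by linarith : (0:ℝ) < 1 - lam) hρpos], by linarith⟩

lemma strip_bound {Ω : Set E2} (hconv : Convex ℝ Ω) (hΩ : IsOpen Ω)
    {r : ℝ} (hr : 0 < r) {x₀ v w : E2}
    (hw1 : ‖w‖ = 1)
    (hdecomp : ∀ z : E2, z = ⟪v, z⟫ • v + ⟪w, z⟫ • w)
    (hnorm : ∀ α β : ℝ, ‖α • v + β • w‖ ^ 2 = α ^ 2 + β ^ 2)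
    (hball : ∀ t : ℝ, 0 ≤ t → ∀ ρ : ℝ, ρ < r → Metric.ball (x₀ + t • v) ρ ⊆ Ω)
    (hub : ∀ (c : E2) (ρ : ℝ), Metric.ball c ρ ⊆ Ω → ρ ≤ r)
    {y : E2} (hy : y ∈ Ω) : ⟪w, y - x₀⟫ < r := by
  by_contra hcon
  push_neg at hcon
  obtain ⟨ε₀, hε₀, hby⟩ := Metric.isOpen_iff.1 hΩ y hy
  have hww : ⟪w, w⟫ = (1:ℝ) := by
    rw [real_inner_self_eq_norm_sq, hw1]; norm_num
  obtain ⟨y', hy'def⟩ : ∃ z : E2, z = y + (ε₀ / 2) • w := ⟨_, rfl⟩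
  have hy' : y' ∈ Ω := by
    apply hby
    rw [Metric.mem_ball, dist_eq_norm]
    have h1 : y' - y = (ε₀ / 2) • w := by rw [hy'def]; abel
    rw [h1, norm_smul, hw1, mul_one, Real.norm_eq_abs, abs_of_pos (by linarith)]
    linarith
  obtain ⟨h', hh'def⟩ : ∃ c : ℝ, c = ⟪w, y' - x₀⟫ := ⟨_, rfl⟩
  have hh' : h' = ⟪w, y - x₀⟫ + ε₀ / 2 := by
    rw [hh'def, hy'def]
    have h1 : y + (ε₀ / 2) • w - x₀ = (y - x₀) + (ε₀ / 2) • w := by abel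
    rw [h1, inner_add_right, real_inner_smul_right, hww]
    ring
  have hh'r : r < h' := by rw [hh']; linarith
  have hh'pos : 0 < h' := lt_trans hr hh'r
  obtain ⟨a, hadef⟩ : ∃ c : ℝ, c = ⟪v, y' - x₀⟫ := ⟨_, rfl⟩
  obtain ⟨ε, hεdef⟩ : ∃ c : ℝ, c = h' - r := ⟨_, rfl⟩
  have hεpos : 0 < ε := by rw [hεdef]; linarith
  obtain ⟨lam, hlamdef⟩ : ∃ c : ℝ, c = min (1/2) (r / ε) := ⟨_, rfl⟩
  have hlam_pos : 0 < lam := by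
    rw [hlamdef]; exact lt_min (by norm_num) (by positivity)
  have hlam_le : lam ≤ 1/2 := by rw [hlamdef]; exact min_le_left _ _
  have hlam_eps : lam * ε ≤ r := by
    have h1 : lam ≤ r / ε := by rw [hlamdef]; exact min_le_right _ _
    calc lam * ε ≤ (r / ε) * ε := by nlinarith
    _ = r := by field_simp
  obtain ⟨ρ, hρdef⟩ : ∃ c : ℝ, c = r - lam * ε / 4 := ⟨_, rfl⟩
  have hρpos : 0 < ρ := by rw [hρdef]; nlinarith
  have hρr : ρ < r := by rw [hρdef]; nlinarith
  obtain ⟨R, hRdef⟩ : ∃ c : ℝ, c = r + lam * ε / 4 := ⟨_, rfl⟩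
  have hR0 : (0:ℝ) < R := by rw [hRdef]; nlinarith
  obtain ⟨m, hmdef⟩ : ∃ c : ℝ, c = lam * (h' - ρ) / 2 := ⟨_, rfl⟩
  obtain ⟨C, hCdef⟩ : ∃ c : ℝ, c = |a| + R := ⟨_, rfl⟩
  have hgap : m - R + ρ = lam ^ 2 * ε / 8 := by
    rw [hmdef, hRdef, hρdef, hεdef]; ring
  have hgap2 : lam * h' + (1 - lam) * ρ - (m + R) = lam ^ 2 * ε / 8 := by
    rw [hmdef, hRdef, hρdef, hεdef]; ring
  have key : Metric.ball (x₀ + C • v + m • w) R ⊆ Ω := by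
    intro p hp
    obtain ⟨α, hαdef⟩ : ∃ c : ℝ, c = ⟪v, p - x₀⟫ := ⟨_, rfl⟩
    obtain ⟨β, hβdef⟩ : ∃ c : ℝ, c = ⟪w, p - x₀⟫ := ⟨_, rfl⟩
    have hpdec : p - x₀ = α • v + β • w := by rw [hαdef, hβdef]; exact hdecomp _
    have hpdec' : p = x₀ + α • v + β • w := by
      have h1 := hpdec
      rw [sub_eq_iff_eq_add] at h1
      rw [h1]; abel
    have hy'dec : y' = x₀ + a • v + h' • w := by
      have h1 := hdecomp (y' - x₀)
      rw [← hadef, ← hh'def] at h1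
      rw [sub_eq_iff_eq_add] at h1
      rw [h1]; abel
    have hpc : p - (x₀ + C • v + m • w) = (α - C) • v + (β - m) • w := by
      rw [hpdec']
      rw [sub_smul, sub_smul]; abel
    have hplt : ‖(α - C) • v + (β - m) • w‖ < R := by
      rw [← hpc, ← dist_eq_norm]; exact hp
    have hsq : (α - C) ^ 2 + (β - m) ^ 2 < R ^ 2 := by
      rw [← hnorm (α - C) (β - m)]
      exact pow_lt_pow_left₀ hplt (norm_nonneg _) (by norm_num)
    have hβub : β < m + R := by nlinarith [sq_nonneg (α - C), hR0, hCdef]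
    have hβlb : m - R < β := by nlinarith [sq_nonneg (α - C), hR0, hCdef]
    have hαlb : |a| < α := by nlinarith [sq_nonneg (β - m), hR0, abs_nonneg a, hCdef]
    obtain ⟨lam', h0, h1, h2⟩ := exists_lam' r ε lam h' ρ R m β hεpos hlam_pos hlam_le
      hρpos hh'pos hgap hgap2 hβub hβlb
    have hlam'lt : lam' < 1 := lt_of_le_of_lt h1 (by linarith)
    have h1l : (0:ℝ) < 1 - lam' := by linarith
    have hne : (1:ℝ) - lam' ≠ 0 := h1l.ne'
    obtain ⟨t, htdef⟩ : ∃ c : ℝ, c = (α - lam' * a) / (1 - lam') := ⟨_, rfl⟩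
    have ht0 : 0 ≤ t := by
      rw [htdef]
      apply div_nonneg _ h1l.le
      have h3 : lam' * a ≤ |a| := by
        calc lam' * a ≤ lam' * |a| := by nlinarith [le_abs_self a]
        _ ≤ 1 * |a| := by nlinarith [abs_nonneg a]
        _ = |a| := one_mul _
      linarith
    obtain ⟨q, hqdef⟩ : ∃ z : E2, z = x₀ + t • v + (1 - lam')⁻¹ • ((β - lam' * h') • w) :=
      ⟨_, rfl⟩
    have hqball : q ∈ Metric.ball (x₀ + t • v) ρ := by
      rw [Metric.mem_ball, dist_eq_norm]
      have h3 : q - (x₀ + t • v) = (1 - lam')⁻¹ • ((β - lam' * h') • w) := by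
        rw [hqdef]; abel
      rw [h3, norm_smul, norm_smul, hw1, mul_one, Real.norm_eq_abs, Real.norm_eq_abs,
        abs_of_pos (inv_pos.2 h1l)]
      calc (1 - lam')⁻¹ * |β - lam' * h'| < (1 - lam')⁻¹ * ((1 - lam') * ρ) :=
            mul_lt_mul_of_pos_left h2 (inv_pos.2 h1l)
      _ = ρ := by field_simp
    have hqΩ : q ∈ Ω := hball t ht0 ρ hρr hqball
    have hcombo : (1 - lam') • q + lam' • y' = p := by
      rw [hqdef, htdef, hy'dec, hpdec']
      match_scalars <;> field_simp <;> ring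
    rw [← hcombo]
    exact hconv hqΩ hy' h1l.le h0 (by ring)
  have hfinal := hub _ R key
  rw [hRdef] at hfinal
  nlinarith [mul_pos hlam_pos hεpos]

theorem main (Ω : Set (EuclideanSpace ℝ (Fin 2)))
    (hΩ : IsOpen Ω) (hconv : Convex ℝ Ω) (hunb : ¬ Bornology.IsBounded Ω)
    (hfin : einradius Ω < ⊤) (hM : (highRidge Ω).Nonempty) :
    ∃ g : EuclideanSpace ℝ (Fin 2) ≃ᵃⁱ[ℝ] EuclideanSpace ℝ (Fin 2),
      {p : EuclideanSpace ℝ (Fin 2) |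
          0 ≤ p 0 ∧ p 1 ∈ Set.Ioo (-(inradius Ω)) (inradius Ω)} ⊆ g '' Ω ∧
      g '' Ω ⊆ {p : EuclideanSpace ℝ (Fin 2) | p 1 ∈ Set.Ioo (-(inradius Ω)) (inradius Ω)} := by
  obtain ⟨x₀, hx₀Ω, hx₀ball⟩ := hM
  -- r > 0
  obtain ⟨ε₁, hε₁, hε₁ball⟩ := Metric.isOpen_iff.1 hΩ x₀ hx₀Ω
  have hrpos : 0 < inradius Ω := lt_of_lt_of_le hε₁ (ball_le_inradius hfin hε₁ball)
  have hub : ∀ (c : E2) (ρ : ℝ), Metric.ball c ρ ⊆ Ω → ρ ≤ inradius Ω :=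
    fun c ρ h => ball_le_inradius hfin h
  -- unboundedness: far away points
  have H : ∀ n : ℕ, ∃ y ∈ Ω, (n : ℝ) + 1 ≤ dist y x₀ := by
    intro n
    by_contra hcontra
    push_neg at hcontra
    exact hunb ((Metric.isBounded_closedBall (x := x₀) (r := (n : ℝ) + 1)).subset
      fun z hz => Metric.mem_closedBall.2 (hcontra z hz).le)
  choose y hyΩ hyd using H
  have hd_pos : ∀ n, (0:ℝ) < dist (y n) x₀ := fun n =>
    lt_of_lt_of_le (by positivity) (hyd n)
  -- direction of recession
  obtain ⟨v, hv_mem, φ, hφ, htend⟩ :=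
    (isCompact_sphere (0:E2) 1).tendsto_subseq
      (x := fun n => (dist (y n) x₀)⁻¹ • (y n - x₀))
      (fun n => by
        rw [mem_sphere_zero_iff_norm, norm_smul, Real.norm_eq_abs,
          abs_of_pos (inv_pos.2 (hd_pos n)), ← dist_eq_norm]
        exact inv_mul_cancel₀ (hd_pos n).ne')
  have hv1 : ‖v‖ = 1 := mem_sphere_zero_iff_norm.1 hv_mem
  have hray_cl : ∀ t : ℝ, 0 ≤ t → x₀ + t • v ∈ closure Ω := by
    intro t ht
    have htend2 : Tendsto (fun k => x₀ + t • ((dist (y (φ k)) x₀)⁻¹ • (y (φ k) - x₀)))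
        atTop (nhds (x₀ + t • v)) := tendsto_const_nhds.add (htend.const_smul t)
    apply mem_closure_of_tendsto htend2
    filter_upwards [eventually_ge_atTop ⌈t⌉₊] with k hk
    have hkt : t ≤ dist (y (φ k)) x₀ := by
        calc t ≤ (⌈t⌉₊ : ℝ) := Nat.le_ceil t
        _ ≤ (k : ℝ) := by exact_mod_cast hk
        _ ≤ (φ k : ℝ) := by exact_mod_cast hφ.le_apply
        _ ≤ (φ k : ℝ) + 1 := by linarith
        _ ≤ dist (y (φ k)) x₀ := hyd (φ k)
    have heq : x₀ + t • ((dist (y (φ k)) x₀)⁻¹ • (y (φ k) - x₀))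
        = x₀ + (t / dist (y (φ k)) x₀) • (y (φ k) - x₀) := by
      rw [smul_smul, div_eq_mul_inv]
    rw [heq]
    exact hconv.add_smul_sub_mem hx₀Ω (hyΩ (φ k))
      ⟨by positivity, div_le_one_of_le₀ hkt (hd_pos (φ k)).le⟩
  -- balls along the ray
  have hball : ∀ t : ℝ, 0 ≤ t → ∀ ρ : ℝ, ρ < inradius Ω →
      Metric.ball (x₀ + t • v) ρ ⊆ Ω := by
    intro t ht ρ hρ p hp
    have hδ : ‖p - (x₀ + t • v)‖ < ρ := by rw [← dist_eq_norm]; exact hp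
    obtain ⟨δ, hδdef⟩ : ∃ c : ℝ, c = ‖p - (x₀ + t • v)‖ := ⟨_, rfl⟩
    have hδ0 : 0 ≤ δ := hδdef ▸ norm_nonneg _
    have hδρ : δ < ρ := hδdef ▸ hδ
    have hδr : δ < inradius Ω := lt_trans hδρ hρ
    obtain ⟨T, hTdef⟩ : ∃ c : ℝ, c = t * inradius Ω / (inradius Ω - δ) + 1 := ⟨_, rfl⟩
    have hT0 : 0 < T := by
      rw [hTdef]
      have : 0 ≤ t * inradius Ω / (inradius Ω - δ) :=
        div_nonneg (by positivity) (by linarith)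
      linarith
    have hTt : t < T := by
      rw [hTdef]
      have h1 : t ≤ t * inradius Ω / (inradius Ω - δ) := by
        rw [le_div_iff₀ (by linarith)]
        nlinarith
      linarith
    obtain ⟨lam, hlamdef⟩ : ∃ c : ℝ, c = t / T := ⟨_, rfl⟩
    have hlam0 : 0 ≤ lam := by rw [hlamdef]; positivity
    have hlam1 : lam < 1 := by
      rw [hlamdef, div_lt_one hT0]; exact hTt
    have hlamT : lam * T = t := by
      rw [hlamdef]; field_simp
    have hne : inradius Ω - δ ≠ 0 := by intro hc; rw [sub_eq_zero] at hc; linarith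
    have hTid : T * (inradius Ω - δ) = t * inradius Ω + (inradius Ω - δ) := by
      rw [hTdef]; field_simp
    have h8 : δ * T < (T - t) * inradius Ω := by nlinarith [hTid, hδr]
    have hkey : δ < (1 - lam) * inradius Ω := by
      rw [hlamdef]
      rw [show (1 - t / T) * inradius Ω = (T - t) * inradius Ω / T by field_simp]
      rw [lt_div_iff₀ hT0]
      linarith [h8]
    obtain ⟨q, hqdef⟩ : ∃ z : E2, z = x₀ + (1 - lam)⁻¹ • (p - x₀ - t • v) := ⟨_, rfl⟩
    have hq : q ∈ Metric.ball x₀ (inradius Ω) := by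
      rw [Metric.mem_ball, dist_eq_norm]
      have h3 : q - x₀ = (1 - lam)⁻¹ • (p - x₀ - t • v) := by rw [hqdef]; abel
      have h4 : p - x₀ - t • v = p - (x₀ + t • v) := by abel
      rw [h3, h4, norm_smul, Real.norm_eq_abs, abs_of_pos (inv_pos.2 (by linarith)), ← hδdef]
      rw [inv_mul_lt_iff₀ (by linarith)]
      exact hkey
    have hqΩ : q ∈ Ω := hx₀ball hq
    have hz : x₀ + T • v ∈ closure Ω := hray_cl T hT0.le
    have hcombo : (1 - lam) • q + lam • (x₀ + T • v) = p := by
      rw [hqdef]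
      have h5 : (1 - lam) • (x₀ + (1 - lam)⁻¹ • (p - x₀ - t • v))
          = (1 - lam) • x₀ + (p - x₀ - t • v) := by
        rw [smul_add, smul_inv_smul₀ (by intro hc; rw [sub_eq_zero] at hc; linarith)]
      rw [h5, smul_add]
      have h6 : lam • (T • v) = t • v := by rw [smul_smul, hlamT]
      rw [h6]
      have h7 : (1 - lam) • x₀ + lam • x₀ = x₀ := by
        rw [← add_smul]; norm_num
      calc (1 - lam) • x₀ + (p - x₀ - t • v) + (lam • x₀ + t • v)
          = ((1 - lam) • x₀ + lam • x₀) + (p - x₀ - t • v) + t • v := by abel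
      _ = p := by rw [h7]; abel
    have hmem : (1 - lam) • q + lam • (x₀ + T • v) ∈ interior Ω :=
      hconv.combo_interior_closure_mem_interior (hΩ.interior_eq.symm ▸ hqΩ) hz
        (show (0:ℝ) < 1 - lam by linarith) hlam0 (by ring)
    rw [← hcombo]
    exact hΩ.interior_eq ▸ hmem
  -- the orthogonal direction
  obtain ⟨w, hwdef⟩ : ∃ z : E2, z = (WithLp.equiv 2 (Fin 2 → ℝ)).symm ![-(v 1), v 0] := ⟨_, rfl⟩
  have hw0 : w 0 = -(v 1) := by rw [hwdef]; rfl
  have hw1' : w 1 = v 0 := by rw [hwdef]; rfl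
  have hinner_vw : ⟪v, w⟫ = (0:ℝ) := by
    simp only [PiLp.inner_apply, RCLike.inner_apply, Fin.sum_univ_two, hw0, hw1', conj_trivial]
    ring
  have hnw : ‖w‖ = 1 := by
    rw [EuclideanSpace.norm_eq, Fin.sum_univ_two, hw0, hw1', norm_neg]
    rw [EuclideanSpace.norm_eq, Fin.sum_univ_two] at hv1
    rw [add_comm]
    exact hv1
  have hvv : ⟪v, v⟫ = (1:ℝ) := by rw [real_inner_self_eq_norm_sq, hv1]; norm_num
  have hww : ⟪w, w⟫ = (1:ℝ) := by rw [real_inner_self_eq_norm_sq, hnw]; norm_num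
  have hwv : ⟪w, v⟫ = (0:ℝ) := by rw [real_inner_comm]; exact hinner_vw
  have hon : Orthonormal ℝ ![v, w] := by
    rw [orthonormal_iff_ite]
    intro i j
    fin_cases i <;> fin_cases j <;> simp [hvv, hww, hinner_vw, hwv, hv1, hnw]
  have hcard : Fintype.card (Fin 2) = Module.finrank ℝ E2 := by
    simp
  let b : OrthonormalBasis (Fin 2) ℝ E2 :=
    OrthonormalBasis.mk hon ((hon.linearIndependent.span_eq_top_of_card_eq_finrank hcard).ge)
  have hb0 : b 0 = v := by
    show (OrthonormalBasis.mk hon _) 0 = v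
    rw [OrthonormalBasis.coe_mk]
    rfl
  have hb1 : b 1 = w := by
    show (OrthonormalBasis.mk hon _) 1 = w
    rw [OrthonormalBasis.coe_mk]
    rfl
  have hdecomp : ∀ z : E2, z = ⟪v, z⟫ • v + ⟪w, z⟫ • w := by
    intro z
    have h1 := b.sum_repr' z
    rw [Fin.sum_univ_two, hb0, hb1] at h1
    exact h1.symm
  have hnorm : ∀ α β : ℝ, ‖α • v + β • w‖ ^ 2 = α ^ 2 + β ^ 2 := by
    intro α β
    rw [norm_add_sq_real, norm_smul, norm_smul, real_inner_smul_left, real_inner_smul_right,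
      hinner_vw, hv1, hnw, Real.norm_eq_abs, Real.norm_eq_abs, mul_one, mul_one, sq_abs, sq_abs]
    ring
  have hstrip : ∀ z ∈ Ω, ⟪w, z - x₀⟫ < inradius Ω :=
    fun z hz => strip_bound hconv hΩ hrpos hnw hdecomp hnorm hball hub hz
  have hdecomp' : ∀ z : E2, z = ⟪v, z⟫ • v + ⟪-w, z⟫ • (-w) := by
    intro z
    rw [inner_neg_left, neg_smul_neg]
    exact hdecomp z
  have hnorm' : ∀ α β : ℝ, ‖α • v + β • (-w)‖ ^ 2 = α ^ 2 + β ^ 2 := by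
    intro α β
    rw [smul_neg, ← neg_smul, hnorm α (-β)]
    ring
  have hstripneg : ∀ z ∈ Ω, ⟪-w, z - x₀⟫ < inradius Ω :=
    fun z hz => strip_bound hconv hΩ hrpos (by rw [norm_neg]; exact hnw) hdecomp' hnorm'
      hball hub hz
  -- the rigid motion
  refine ⟨(AffineIsometryEquiv.constVAdd ℝ E2 (-x₀)).trans b.repr.toAffineIsometryEquiv, ?_, ?_⟩
  · rintro p ⟨hp0, hp1, hp2⟩
    have habs : |p 1| < inradius Ω := abs_lt.2 ⟨hp1, hp2⟩
    refine ⟨x₀ + p 0 • v + p 1 • w, ?_, ?_⟩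
    · apply hball (p 0) hp0 ((|p 1| + inradius Ω)/2) (by linarith)
      rw [Metric.mem_ball, dist_eq_norm]
      have h1 : x₀ + p 0 • v + p 1 • w - (x₀ + p 0 • v) = p 1 • w := by abel
      rw [h1, norm_smul, hnw, mul_one, Real.norm_eq_abs]
      linarith
    · show b.repr (-x₀ +ᵥ (x₀ + p 0 • v + p 1 • w)) = p
      have h1 : -x₀ +ᵥ (x₀ + p 0 • v + p 1 • w) = p 0 • v + p 1 • w := by
        rw [vadd_eq_add]; abel
      rw [h1]
      ext i
      rw [b.repr_apply_apply]
      fin_cases i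
      · show ⟪b 0, p 0 • v + p 1 • w⟫ = p 0
        rw [hb0, inner_add_right, real_inner_smul_right, real_inner_smul_right, hvv, hinner_vw]
        ring
      · show ⟪b 1, p 0 • v + p 1 • w⟫ = p 1
        rw [hb1, inner_add_right, real_inner_smul_right, real_inner_smul_right, hwv, hww]
        ring
  · rintro _ ⟨z, hz, rfl⟩
    have h3 : ((AffineIsometryEquiv.constVAdd ℝ E2 (-x₀)).trans
        b.repr.toAffineIsometryEquiv) z 1 = ⟪w, z - x₀⟫ := by
      show b.repr (-x₀ +ᵥ z) 1 = _
      rw [b.repr_apply_apply, hb1]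
      congr 1
      rw [vadd_eq_add, neg_add_eq_sub]
    refine ⟨?_, ?_⟩
    · have h2 := hstripneg z hz
      rw [inner_neg_left] at h2
      rw [h3]
      linarith
    · rw [h3]
      exact hstrip z hz

end Statement14Aux

/-- an unbounded open convex set `Ω ⊆ ℝ²` with finite inradius and
nonempty high ridge set satisfies, up to a rigid motion,
`[0,∞) × (-r_Ω, r_Ω) ⊆ Ω ⊆ ℝ × (-r_Ω, r_Ω)`. -/
theorem statement_14 (Ω : Set (EuclideanSpace ℝ (Fin 2)))
    (hΩ : IsOpen Ω) (hconv : Convex ℝ Ω) (hunb : ¬ Bornology.IsBounded Ω)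
    (hfin : einradius Ω < ⊤) (hM : (highRidge Ω).Nonempty) :
    ∃ g : EuclideanSpace ℝ (Fin 2) ≃ᵃⁱ[ℝ] EuclideanSpace ℝ (Fin 2),
      {p : EuclideanSpace ℝ (Fin 2) |
          0 ≤ p 0 ∧ p 1 ∈ Set.Ioo (-(inradius Ω)) (inradius Ω)} ⊆ g '' Ω ∧
      g '' Ω ⊆ {p : EuclideanSpace ℝ (Fin 2) | p 1 ∈ Set.Ioo (-(inradius Ω)) (inradius Ω)} := by
  exact Statement14Aux.main Ω hΩ hconv hunb hfin hM

end
end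

section
/- Let Ω ⊆ ℝ² be an unbounded open convex set with finite inradius r_Ω < ∞ and empty high ridge set M(Ω) = ∅. Then there exists a convex function f : (-r_Ω, r_Ω) → ℝ such that at least one of the limits of f(t) as t → (-r_Ω)^+ or as t → (r_Ω)^- equals +∞, and such that, up to a rigid motion of the plane, Ω = { (x₁, x₂) ∈ ℝ² : -r_Ω < x₂ < r_Ω and x₁ > f(x₂) }. -/
open MeasureTheory Set Filter
open scoped ENNReal

noncomputable section

namespace S15

abbrev E2 := EuclideanSpace ℝ (Fin 2)

def mkpt (x y : ℝ) : E2 := WithLp.toLp 2 ![x, y]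

@[simp] lemma mkpt_zero (x y : ℝ) : mkpt x y 0 = x := rfl
@[simp] lemma mkpt_one (x y : ℝ) : mkpt x y 1 = y := rfl

lemma mkpt_eta (p : E2) : mkpt (p 0) (p 1) = p := by
  ext i; fin_cases i <;> rfl

lemma dist_mkpt (x y x' y' : ℝ) :
    dist (mkpt x y) (mkpt x' y') = Real.sqrt ((x - x')^2 + (y - y')^2) := by
  rw [EuclideanSpace.dist_eq]
  congr 1
  simp [Fin.sum_univ_two, Real.dist_eq, sq_abs]

lemma dist_coord_le (p q : E2) (i : Fin 2) : |p i - q i| ≤ dist p q := by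
  rw [EuclideanSpace.dist_eq]
  rw [show |p i - q i| = Real.sqrt ((p i - q i)^2) from (Real.sqrt_sq_eq_abs _).symm]
  apply Real.sqrt_le_sqrt
  rw [show (p i - q i)^2 = dist (p i) (q i) ^2 by rw [Real.dist_eq, sq_abs]]
  exact Finset.single_le_sum (f := fun j => dist (p j) (q j) ^ 2)
    (fun j _ => sq_nonneg _) (Finset.mem_univ i)

lemma add_smul_e0 (p : E2) (t : ℝ) : p + t • mkpt 1 0 = mkpt (p 0 + t) (p 1) := by
  ext i; fin_cases i <;> simp [mkpt]

lemma einradius_image (g : E2 ≃ᵃⁱ[ℝ] E2) (Ω : Set E2) :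
    einradius (g '' Ω) = einradius Ω := by
  unfold einradius
  rw [iSup_image]
  refine iSup_congr fun x => iSup_congr fun _ => ?_
  rw [show (g '' Ω)ᶜ = g '' Ωᶜ from (Set.image_compl_eq g.toEquiv.bijective).symm]
  exact EMetric.infEdist_image g.isometry

lemma inradius_image (g : E2 ≃ᵃⁱ[ℝ] E2) (Ω : Set E2) :
    inradius (g '' Ω) = inradius Ω := by
  unfold inradius; rw [einradius_image]

lemma highRidge_image (g : E2 ≃ᵃⁱ[ℝ] E2) (Ω : Set E2) :
    highRidge (g '' Ω) = g '' highRidge Ω := by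
  unfold highRidge
  ext p
  constructor
  · rintro ⟨⟨x, hx, rfl⟩, hball⟩
    refine ⟨x, ⟨hx, ?_⟩, rfl⟩
    intro z hz
    have : g z ∈ Metric.ball (g x) (inradius (g '' Ω)) := by
      rw [Metric.mem_ball, (AffineIsometryEquiv.isometry g).dist_eq, inradius_image]
      exact hz
    have := hball this
    rcases this with ⟨w, hw, hgw⟩
    rwa [g.injective hgw] at hw
  · rintro ⟨x, ⟨hx, hball⟩, rfl⟩
    refine ⟨⟨x, hx, rfl⟩, ?_⟩
    intro z hz
    refine ⟨g.symm z, hball ?_, by simp⟩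
    rw [Metric.mem_ball]
    have : dist (g (g.symm z)) (g x) < inradius Ω := by
      simpa [inradius_image] using hz
    rwa [(AffineIsometryEquiv.isometry g).dist_eq] at this

lemma ofReal_le_einradius {Ω : Set E2} {x : E2} {ρ : ℝ} (hx : x ∈ Ω)
    (hball : Metric.ball x ρ ⊆ Ω) : ENNReal.ofReal ρ ≤ einradius Ω := by
  have h1 : ENNReal.ofReal ρ ≤ EMetric.infEdist x Ωᶜ := by
    apply EMetric.le_infEdist.2
    intro y hy
    have : ¬ dist x y < ρ := fun h => hy (hball (by rwa [Metric.mem_ball, dist_comm]))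
    rw [edist_dist]
    exact ENNReal.ofReal_le_ofReal (not_lt.1 this)
  exact h1.trans (le_iSup₂ (f := fun x (_ : x ∈ Ω) => EMetric.infEdist x Ωᶜ) x hx)

lemma einradius_le_slab {Ω : Set E2} {α β : ℝ} (hab : α ≤ β)
    (h : ∀ p ∈ Ω, p 1 ∈ Set.Ioo α β) :
    einradius Ω ≤ ENNReal.ofReal ((β - α)/2) := by
  refine iSup₂_le fun x hx => ?_
  rcases le_or_gt (x 1) ((α+β)/2) with hle | hlt
  · -- use lower boundary point
    set z : E2 := WithLp.toLp 2 (fun i => if i = 1 then α else x i) with hz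
    have hznot : z ∈ Ωᶜ := by
      intro hzin
      have := h z hzin
      simp [hz] at this
    calc EMetric.infEdist x Ωᶜ ≤ edist x z := EMetric.infEdist_le_edist_of_mem hznot
      _ ≤ ENNReal.ofReal ((β - α)/2) := by
          rw [edist_dist]
          apply ENNReal.ofReal_le_ofReal
          rw [EuclideanSpace.dist_eq]
          have hd : ∀ i, dist (x i) (z i) ^ 2 = (if i = 1 then (x 1 - α)^2 else 0) := by
            intro i
            fin_cases i <;> simp [hz, Real.dist_eq, sq_abs]
          rw [Fin.sum_univ_two, hd 0, hd 1]
          simp only [Fin.isValue, if_neg, if_pos]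
          norm_num
          rw [Real.sqrt_sq_eq_abs, abs_of_nonneg (by have := (h x hx).1; linarith)]
          have := (h x hx).1
          linarith
  · set z : E2 := WithLp.toLp 2 (fun i => if i = 1 then β else x i) with hz
    have hznot : z ∈ Ωᶜ := by
      intro hzin
      have := h z hzin
      simp [hz] at this
    calc EMetric.infEdist x Ωᶜ ≤ edist x z := EMetric.infEdist_le_edist_of_mem hznot
      _ ≤ ENNReal.ofReal ((β - α)/2) := by
          rw [edist_dist]
          apply ENNReal.ofReal_le_ofReal
          rw [EuclideanSpace.dist_eq]
          have hd : ∀ i, dist (x i) (z i) ^ 2 = (if i = 1 then (x 1 - β)^2 else 0) := by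
            intro i
            fin_cases i <;> simp [hz, Real.dist_eq, sq_abs]
          rw [Fin.sum_univ_two, hd 0, hd 1]
          simp only [Fin.isValue, if_neg, if_pos]
          norm_num
          rw [Real.sqrt_sq_eq_abs, abs_of_nonpos (by have := (h x hx).2; linarith)]
          have := (h x hx).2
          linarith

lemma recession_of_closure {Ω : Set E2} (hΩ : IsOpen Ω) (hconv : Convex ℝ Ω)
    {x₀ v : E2} (h : ∀ t : ℝ, 0 ≤ t → x₀ + t • v ∈ closure Ω) :
    ∀ x ∈ Ω, ∀ t : ℝ, 0 ≤ t → x + t • v ∈ Ω := by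
  intro x hx t ht
  rcases eq_or_lt_of_le ht with rfl | ht
  · simpa using hx
  -- choose small λ
  obtain ⟨ε, hε, hball⟩ := Metric.isOpen_iff.1 hΩ x hx
  have hx0 : (0:ℝ) ≤ ‖x - x₀‖ := norm_nonneg _
  set lam : ℝ := min (1/2) (ε / (2 * (‖x - x₀‖ + 1))) with hlam
  have hpos : 0 < lam := by
    apply lt_min (by norm_num)
    positivity
  have hlt1 : lam < 1 := lt_of_le_of_lt (min_le_left _ _) (by norm_num)
  set z : E2 := (1 - lam)⁻¹ • (x - lam • x₀) with hzdef
  have hz : z ∈ Ω := by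
    apply hball
    rw [Metric.mem_ball, dist_eq_norm]
    have h1l : (1 - lam) ≠ 0 := by linarith
    have h1 : z - x = ((1-lam)⁻¹ * lam) • (x - x₀) := by
      rw [hzdef]
      match_scalars <;> field_simp <;> ring
    rw [h1, norm_smul]
    have hnn : ‖(1-lam)⁻¹ * lam‖ = (1-lam)⁻¹ * lam := by
      rw [Real.norm_eq_abs, abs_of_nonneg]
      exact mul_nonneg (inv_nonneg.2 (by linarith)) hpos.le
    rw [hnn]
    have hinv : (1-lam)⁻¹ ≤ 2 := by
      rw [inv_le_comm₀ (by linarith) (by norm_num)]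
      have := min_le_left (1/2 : ℝ) (ε / (2 * (‖x - x₀‖ + 1)))
      rw [← hlam] at this
      linarith
    have hlam2 : lam ≤ ε / (2 * (‖x - x₀‖ + 1)) := min_le_right _ _
    set N := ‖x - x₀‖ with hN
    have hinv0 : (0:ℝ) ≤ (1-lam)⁻¹ := inv_nonneg.2 (by linarith)
    have e1 : (1-lam)⁻¹ * lam * N ≤ 2 * lam * N := by
      nlinarith [mul_nonneg hpos.le hx0]
    have e2 : 2 * lam * N ≤ 2 * (ε / (2 * (N + 1))) * N := by
      nlinarith [div_nonneg hε.le (by linarith : (0:ℝ) ≤ 2 * (N+1))]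
    have e3 : 2 * (ε / (2 * (N + 1))) * N < ε := by
      rw [show 2 * (ε / (2 * (N + 1))) * N = ε * (2*N) / (2 * (N + 1)) by ring]
      rw [div_lt_iff₀ (by linarith)]
      nlinarith
    linarith
  have hy : x₀ + (t / lam) • v ∈ closure Ω := h _ (by positivity)
  have h1l : (1 - lam) ≠ 0 := by linarith
  have key : (1 - lam) • z + lam • (x₀ + (t/lam) • v) = x + t • v := by
    rw [hzdef]
    match_scalars <;> field_simp <;> ring
  have := hconv.combo_interior_closure_mem_interior
    (by rwa [hΩ.interior_eq]) hy (by linarith : (0:ℝ) < 1 - lam) hpos.le (by ring)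
  rw [key, hΩ.interior_eq] at this
  exact this

lemma recession_exists {Ω : Set E2} (hΩ : IsOpen Ω) (hconv : Convex ℝ Ω)
    (hunb : ¬ Bornology.IsBounded Ω) (hne : Ω.Nonempty) :
    ∃ v : E2, ‖v‖ = 1 ∧ ∀ x ∈ Ω, ∀ t : ℝ, 0 ≤ t → x + t • v ∈ Ω := by
  obtain ⟨x₀, hx₀⟩ := hne
  -- sequence escaping to infinity
  have hseq : ∀ n : ℕ, ∃ x ∈ Ω, (n : ℝ) + 1 ≤ ‖x - x₀‖ := by
    intro n
    by_contra hcon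
    push_neg at hcon
    apply hunb
    have : Ω ⊆ Metric.closedBall x₀ ((n:ℝ)+1) := by
      intro x hx
      rw [Metric.mem_closedBall, dist_eq_norm]
      exact (hcon x hx).le
    exact (Metric.isBounded_closedBall).subset this
  choose xs hxs hxs2 using hseq
  have hd : ∀ n, (0:ℝ) < ‖xs n - x₀‖ := fun n => lt_of_lt_of_le (by positivity) (hxs2 n)
  set u : ℕ → E2 := fun n => ‖xs n - x₀‖⁻¹ • (xs n - x₀) with hu
  have husphere : ∀ n, u n ∈ Metric.sphere (0:E2) 1 := by
    intro n
    rw [Metric.mem_sphere, dist_zero_right, hu, norm_smul, Real.norm_eq_abs,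
      abs_of_pos (inv_pos.2 (hd n)), inv_mul_cancel₀ (ne_of_gt (hd n))]
  obtain ⟨v, hv, φ, hmono, hlim⟩ :=
    (isCompact_sphere (0:E2) 1).tendsto_subseq husphere
  have hvnorm : ‖v‖ = 1 := by
    rw [Metric.mem_sphere, dist_zero_right] at hv; exact hv
  refine ⟨v, hvnorm, ?_⟩
  have hclos : ∀ t : ℝ, 0 ≤ t → x₀ + t • v ∈ closure Ω := by
    intro t ht
    have hmem : ∀ᶠ n in atTop, x₀ + t • u (φ n) ∈ Ω := by
      have hbig : ∀ᶠ n in atTop, t ≤ ‖xs (φ n) - x₀‖ := by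
        filter_upwards [eventually_ge_atTop (Nat.ceil t)] with n hn
        calc t ≤ (Nat.ceil t : ℝ) := Nat.le_ceil t
          _ ≤ (n : ℝ) := by exact_mod_cast hn
          _ ≤ (φ n : ℝ) := by exact_mod_cast hmono.le_apply
          _ ≤ (φ n : ℝ) + 1 := by linarith
          _ ≤ ‖xs (φ n) - x₀‖ := hxs2 (φ n)
      filter_upwards [hbig] with n hn
      have : x₀ + t • u (φ n) =
          (1 - t / ‖xs (φ n) - x₀‖) • x₀ + (t / ‖xs (φ n) - x₀‖) • xs (φ n) := by
        rw [hu]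
        have hdn := hd (φ n)
        rw [smul_smul]
        rw [show t * ‖xs (φ n) - x₀‖⁻¹ = t / ‖xs (φ n) - x₀‖ by rw [div_eq_mul_inv]]
        rw [smul_sub, sub_smul, one_smul]
        abel
      rw [this]
      apply hconv hx₀ (hxs (φ n))
      · have hdn := hd (φ n)
        have : t / ‖xs (φ n) - x₀‖ ≤ 1 := by
          rw [div_le_one hdn]; exact hn
        linarith
      · positivity
      · ring
    have htend : Tendsto (fun n => x₀ + t • u (φ n)) atTop (nhds (x₀ + t • v)) := by
      exact tendsto_const_nhds.add (hlim.const_smul t)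
    exact mem_closure_of_tendsto htend hmem
  exact recession_of_closure hΩ hconv hclos
lemma exists_rot (v : E2) (hv : ‖v‖ = 1) :
    ∃ L : E2 ≃ₗᵢ[ℝ] E2, L v = mkpt 1 0 := by
  set a := v 0 with ha
  set b := v 1 with hb
  have hab : a^2 + b^2 = 1 := by
    have h2 : Real.sqrt (a^2 + b^2) = 1 := by
      rw [EuclideanSpace.norm_eq] at hv
      rw [← hv]
      congr 1
      rw [Fin.sum_univ_two]
      simp [Real.norm_eq_abs, sq_abs, ha, hb]
    nlinarith [Real.sq_sqrt (by positivity : (0:ℝ) ≤ a^2 + b^2), Real.sqrt_nonneg (a^2+b^2)]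
  refine ⟨⟨{ toFun := fun p => mkpt (a * p 0 + b * p 1) (-b * p 0 + a * p 1)
             invFun := fun p => mkpt (a * p 0 - b * p 1) (b * p 0 + a * p 1)
             map_add' := by
               intro p q
               ext i
               fin_cases i <;> simp [mkpt] <;> ring
             map_smul' := by
               intro c p
               ext i
               fin_cases i <;> simp [mkpt] <;> ring
             left_inv := by
               intro p
               ext i
               fin_cases i
               · simp [mkpt]; linear_combination (p 0) * hab
               · simp [mkpt]; linear_combination (p 1) * hab
             right_inv := by
               intro p
               ext i
               fin_cases i
               · simp [mkpt]; linear_combination (p 0) * hab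
               · simp [mkpt]; linear_combination (p 1) * hab }, ?_⟩, ?_⟩
  · intro p
    simp only [LinearEquiv.coe_mk, LinearMap.coe_mk, AddHom.coe_mk]
    rw [EuclideanSpace.norm_eq, EuclideanSpace.norm_eq]
    congr 1
    rw [Fin.sum_univ_two, Fin.sum_univ_two]
    simp only [Real.norm_eq_abs, sq_abs, mkpt_zero, mkpt_one]
    linear_combination (p 0^2 + p 1^2) * hab
  · ext i
    fin_cases i
    · show a * v 0 + b * v 1 = 1
      rw [← ha, ← hb]; linear_combination hab
    · show -b * v 0 + a * v 1 = 0
      rw [← ha, ← hb]; ring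
lemma mkpt_decomp (x y : ℝ) : mkpt x y = x • mkpt 1 0 + y • mkpt 0 1 := by
  ext i; fin_cases i <;> simp [mkpt]

lemma continuous_mkpt_left (y : ℝ) : Continuous fun x => mkpt x y := by
  have h : (fun x => mkpt x y) = fun x : ℝ => x • mkpt 1 0 + y • mkpt 0 1 :=
    funext fun x => mkpt_decomp x y
  rw [h]
  exact (continuous_id.smul continuous_const).add continuous_const

lemma continuous_mkpt_right (x : ℝ) : Continuous fun y => mkpt x y := by
  have h : (fun y => mkpt x y) = fun y : ℝ => x • mkpt 1 0 + y • mkpt 0 1 :=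
    funext fun y => mkpt_decomp x y
  rw [h]
  exact continuous_const.add (continuous_id.smul continuous_const)

lemma mkpt_add_smul (x y t : ℝ) : mkpt x y + t • mkpt 1 0 = mkpt (x + t) y := by
  ext i; fin_cases i <;> simp [mkpt]

def Jset (Ω' : Set E2) : Set ℝ := {y | ∃ x, mkpt x y ∈ Ω'}
def Ffun (Ω' : Set E2) : ℝ → ℝ := fun y => sInf {x | mkpt x y ∈ Ω'}

section Main
variable {Ω' : Set E2} (hO : IsOpen Ω') (hc : Convex ℝ Ω')
  (hrec : ∀ p ∈ Ω', ∀ t : ℝ, 0 ≤ t → p + t • mkpt 1 0 ∈ Ω')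
  (hnoline : ∀ y : ℝ, ∃ x : ℝ, mkpt x y ∉ Ω')

include hrec in
lemma slice_up {x x' y : ℝ} (hx : mkpt x y ∈ Ω') (hle : x ≤ x') : mkpt x' y ∈ Ω' := by
  have := hrec _ hx (x' - x) (by linarith)
  rwa [mkpt_add_smul, show x + (x' - x) = x' by ring] at this

include hrec hnoline in
lemma slice_bddBelow (y : ℝ) : BddBelow {x | mkpt x y ∈ Ω'} := by
  by_contra hcon
  obtain ⟨x, hx⟩ := hnoline y
  apply hx
  rw [not_bddBelow_iff] at hcon
  obtain ⟨x', hx', hlt⟩ := hcon x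
  exact slice_up hrec hx' hlt.le

include hO hrec hnoline in
lemma slice_eq {y : ℝ} (hy : y ∈ Jset Ω') :
    {x | mkpt x y ∈ Ω'} = Ioi (Ffun Ω' y) := by
  have hbdd := slice_bddBelow hrec hnoline y
  have hne : {x | mkpt x y ∈ Ω'}.Nonempty := hy
  have hopen : IsOpen {x | mkpt x y ∈ Ω'} := hO.preimage (continuous_mkpt_left y)
  have hninf : Ffun Ω' y ∉ {x | mkpt x y ∈ Ω'} := by
    intro hmem
    obtain ⟨ε, hε, hball⟩ := Metric.isOpen_iff.1 hopen _ hmem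
    have : Ffun Ω' y - ε/2 ∈ {x | mkpt x y ∈ Ω'} := by
      apply hball
      rw [Metric.mem_ball, Real.dist_eq]
      rw [abs_of_nonpos (by linarith)]
      linarith
    have := csInf_le hbdd this
    unfold Ffun at this
    linarith [this]
  ext x
  simp only [mem_setOf_eq, mem_Ioi]
  constructor
  · intro hx
    rcases lt_or_eq_of_le (csInf_le hbdd hx) with h | h
    · exact h
    · rw [← h] at hx
      exact absurd hx hninf
  · intro hx
    obtain ⟨x', hx', hlt⟩ := exists_lt_of_csInf_lt hne hx
    exact slice_up hrec hx' hlt.le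

include hO hrec hnoline in
lemma omega_eq : Ω' = {p : E2 | p 1 ∈ Jset Ω' ∧ Ffun Ω' (p 1) < p 0} := by
  ext p
  simp only [mem_setOf_eq]
  constructor
  · intro hp
    have hJ : p 1 ∈ Jset Ω' := ⟨p 0, by rwa [mkpt_eta]⟩
    refine ⟨hJ, ?_⟩
    have : p 0 ∈ {x | mkpt x (p 1) ∈ Ω'} := by rw [mem_setOf_eq, mkpt_eta]; exact hp
    rwa [slice_eq hO hrec hnoline hJ, mem_Ioi] at this
  · rintro ⟨hJ, hlt⟩
    have : p 0 ∈ {x | mkpt x (p 1) ∈ Ω'} := by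
      rw [slice_eq hO hrec hnoline hJ]; exact hlt
    rwa [mem_setOf_eq, mkpt_eta] at this

include hc in
lemma Jset_convex : Convex ℝ (Jset Ω') := by
  rintro y₁ ⟨x₁, h₁⟩ y₂ ⟨x₂, h₂⟩ a b ha hb hab
  refine ⟨a * x₁ + b * x₂, ?_⟩
  have := hc h₁ h₂ ha hb hab
  have heq : a • mkpt x₁ y₁ + b • mkpt x₂ y₂ = mkpt (a * x₁ + b * x₂) (a • y₁ + b • y₂) := by
    ext i; fin_cases i <;> simp [mkpt]
  rwa [heq] at this

include hO in
lemma Jset_open : IsOpen (Jset Ω') := by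
  have : Jset Ω' = ⋃ x : ℝ, {y | mkpt x y ∈ Ω'} := by
    ext y; simp [Jset, mem_iUnion]
  rw [this]
  exact isOpen_iUnion fun x => hO.preimage (continuous_mkpt_right x)

include hc hrec hnoline in
lemma Ffun_convexOn : ConvexOn ℝ (Jset Ω') (Ffun Ω') := by
  refine ⟨Jset_convex hc, ?_⟩
  rintro y₁ hy₁ y₂ hy₂ a b ha hb hab
  rcases eq_or_lt_of_le ha with rfl | ha'
  · have hb1 : b = 1 := by linarith
    subst hb1; simp
  rcases eq_or_lt_of_le hb with rfl | hb'
  · have ha1 : a = 1 := by linarith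
    subst ha1; simp
  apply le_of_forall_pos_le_add
  intro ε hε
  obtain ⟨x₁, hx₁⟩ := hy₁
  obtain ⟨x₂, hx₂⟩ := hy₂
  have hb₁ := slice_bddBelow hrec hnoline y₁
  have hb₂ := slice_bddBelow hrec hnoline y₂
  have hm₁ : mkpt (Ffun Ω' y₁ + ε) y₁ ∈ Ω' := by
    obtain ⟨x', hx', hlt⟩ := exists_lt_of_csInf_lt ⟨x₁, hx₁⟩
      (show Ffun Ω' y₁ < Ffun Ω' y₁ + ε by linarith)
    exact slice_up hrec hx' hlt.le
  have hm₂ : mkpt (Ffun Ω' y₂ + ε) y₂ ∈ Ω' := by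
    obtain ⟨x', hx', hlt⟩ := exists_lt_of_csInf_lt ⟨x₂, hx₂⟩
      (show Ffun Ω' y₂ < Ffun Ω' y₂ + ε by linarith)
    exact slice_up hrec hx' hlt.le
  have hcomb := hc hm₁ hm₂ ha hb hab
  have heq : a • mkpt (Ffun Ω' y₁ + ε) y₁ + b • mkpt (Ffun Ω' y₂ + ε) y₂ =
      mkpt (a * (Ffun Ω' y₁ + ε) + b * (Ffun Ω' y₂ + ε)) (a • y₁ + b • y₂) := by
    ext i; fin_cases i <;> simp [mkpt]
  rw [heq] at hcomb
  have hle := csInf_le (slice_bddBelow hrec hnoline (a • y₁ + b • y₂)) hcomb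
  unfold Ffun
  calc sInf {x | mkpt x (a • y₁ + b • y₂) ∈ Ω'} ≤
      a * (Ffun Ω' y₁ + ε) + b * (Ffun Ω' y₂ + ε) := hle
    _ = a * Ffun Ω' y₁ + b * Ffun Ω' y₂ + (a + b) * ε := by ring
    _ = a • Ffun Ω' y₁ + b • Ffun Ω' y₂ + ε := by rw [hab]; simp [smul_eq_mul]

include hO hrec hnoline in
lemma mem_of_lt {p : E2} (hJ : p 1 ∈ Jset Ω') (hlt : Ffun Ω' (p 1) < p 0) : p ∈ Ω' := by
  rw [omega_eq hO hrec hnoline]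
  exact ⟨hJ, hlt⟩

lemma rect_ball {c d M : ℝ} (hcd : c < d)
    (h : ∀ p : E2, M < p 0 → p 1 ∈ Ioo c d → p ∈ Ω') :
    ∃ x ∈ Ω', Metric.ball x ((d - c)/2) ⊆ Ω' := by
  set ρ := (d - c)/2 with hρ
  have hρpos : 0 < ρ := by rw [hρ]; linarith
  set x₀ : E2 := mkpt (M + ρ + 1) ((c + d)/2) with hx₀
  have e0 : x₀ 0 = M + ρ + 1 := by simp [hx₀]
  have e1 : x₀ 1 = (c + d)/2 := by simp [hx₀]
  have hx₀mem : x₀ ∈ Ω' := by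
    apply h
    · rw [e0]; linarith
    · rw [e1]; constructor <;> linarith
  refine ⟨x₀, hx₀mem, ?_⟩
  intro p hp
  rw [Metric.mem_ball] at hp
  have h0 := dist_coord_le p x₀ 0
  have h1 := dist_coord_le p x₀ 1
  rw [show x₀ 0 = M + ρ + 1 by simp [hx₀]] at h0
  rw [show x₀ 1 = (c + d)/2 by simp [hx₀]] at h1
  have ha0 : |p 0 - (M + ρ + 1)| < ρ := lt_of_le_of_lt h0 hp
  have ha1 : |p 1 - (c + d)/2| < ρ := lt_of_le_of_lt h1 hp
  rw [abs_lt] at ha0 ha1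
  apply h
  · linarith [ha0.1]
  · constructor
    · rw [hρ] at ha1; linarith [ha1.1]
    · rw [hρ] at ha1; linarith [ha1.2]

include hO hc hrec hnoline in
lemma key_lower {c d : ℝ} (hcJ : c ∈ Jset Ω') (hdJ : d ∈ Jset Ω') (hcd : c < d) :
    ENNReal.ofReal ((d - c)/2) ≤ einradius Ω' := by
    have hFcv := Ffun_convexOn hc hrec hnoline
    have hrect : ∀ p : E2, max (Ffun Ω' c) (Ffun Ω' d) < p 0 → p 1 ∈ Ioo c d → p ∈ Ω' := by
      intro p hp0 hp1
      apply mem_of_lt hO hrec hnoline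
      · exact (Jset_convex hc).ordConnected.out hcJ hdJ ⟨hp1.1.le, hp1.2.le⟩
      · calc Ffun Ω' (p 1) ≤ max (Ffun Ω' c) (Ffun Ω' d) := by
              apply hFcv.le_on_segment hcJ hdJ
              rw [segment_eq_Icc hcd.le]
              exact ⟨hp1.1.le, hp1.2.le⟩
          _ < p 0 := hp0
    obtain ⟨x, hx, hball⟩ := rect_ball (Ω' := Ω') hcd hrect
    exact ofReal_le_einradius hx hball

lemma Jset_bdd (key : ∀ c ∈ Jset Ω', ∀ d ∈ Jset Ω', c < d →
      ENNReal.ofReal ((d - c)/2) ≤ einradius Ω')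
    (hfin : einradius Ω' < ⊤) : BddAbove (Jset Ω') ∧ BddBelow (Jset Ω') := by
  constructor
  · by_contra hcon
    rw [not_bddAbove_iff] at hcon
    -- pick some c ∈ J, then d arbitrarily large
    set R := (einradius Ω').toReal with hR'
    have hR0 : 0 ≤ R := ENNReal.toReal_nonneg
    have : ∃ c, c ∈ Jset Ω' := by
      by_contra hemp
      push_neg at hemp
      obtain ⟨d, hd, _⟩ := hcon 0
      exact hemp d hd
    obtain ⟨c, hcJ⟩ := this
    obtain ⟨d, hdJ, hdlt⟩ := hcon (c + 2*R + 2)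
    have hle := key c hcJ d hdJ (by linarith)
    have : (d - c)/2 ≤ R := by
      rw [hR']
      exact ENNReal.toReal_mono hfin.ne hle |>.trans_eq' (ENNReal.toReal_ofReal (show (0:ℝ) ≤ (d - c)/2 by linarith))
    linarith
  · by_contra hcon
    rw [not_bddBelow_iff] at hcon
    set R := (einradius Ω').toReal with hR'
    have hR0 : 0 ≤ R := ENNReal.toReal_nonneg
    have : ∃ c, c ∈ Jset Ω' := by
      by_contra hemp
      push_neg at hemp
      obtain ⟨d, hd, _⟩ := hcon 0
      exact hemp d hd
    obtain ⟨d, hdJ⟩ := this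
    obtain ⟨c, hcJ, hclt⟩ := hcon (d - 2*R - 2)
    have hle := key c hcJ d hdJ (by linarith)
    have : (d - c)/2 ≤ R := by
      rw [hR']
      exact ENNReal.toReal_mono hfin.ne hle |>.trans_eq' (ENNReal.toReal_ofReal (show (0:ℝ) ≤ (d - c)/2 by linarith))
    linarith

lemma Jset_nonempty (hne : Ω'.Nonempty) : (Jset Ω').Nonempty := by
  obtain ⟨p, hp⟩ := hne
  exact ⟨p 1, p 0, by rwa [mkpt_eta]⟩

include hO hc in
lemma Jset_eq_Ioo (key : ∀ c ∈ Jset Ω', ∀ d ∈ Jset Ω', c < d →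
      ENNReal.ofReal ((d - c)/2) ≤ einradius Ω')
    (hfin : einradius Ω' < ⊤) (hne : Ω'.Nonempty) :
    sInf (Jset Ω') < sSup (Jset Ω') ∧ Jset Ω' = Ioo (sInf (Jset Ω')) (sSup (Jset Ω')) := by
  obtain ⟨bA, bB⟩ := Jset_bdd key hfin
  have hJopen := Jset_open hO
  have hJconv := Jset_convex hc
  have hJne : (Jset Ω').Nonempty := Jset_nonempty hne
  have hmem : ∀ y ∈ Jset Ω', sInf (Jset Ω') < y ∧ y < sSup (Jset Ω') := by
    intro y hy
    constructor
    · rcases lt_or_eq_of_le (csInf_le bB hy) with h | h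
      · exact h
      · exfalso
        obtain ⟨ε, hε, hball⟩ := Metric.isOpen_iff.1 hJopen y hy
        have : y - ε/2 ∈ Jset Ω' := by
          apply hball
          rw [Metric.mem_ball, Real.dist_eq, abs_of_nonpos (by linarith)]
          linarith
        have h2 := csInf_le bB this
        rw [← h] at h2
        linarith
    · rcases lt_or_eq_of_le (le_csSup bA hy) with h | h
      · exact h
      · exfalso
        obtain ⟨ε, hε, hball⟩ := Metric.isOpen_iff.1 hJopen y hy
        have : y + ε/2 ∈ Jset Ω' := by
          apply hball
          rw [Metric.mem_ball, Real.dist_eq, abs_of_nonneg (by linarith)]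
          linarith
        have h2 := le_csSup bA this
        rw [h] at h2
        linarith
  obtain ⟨y₀, hy₀⟩ := hJne
  have hlt := hmem y₀ hy₀
  refine ⟨hlt.1.trans hlt.2, ?_⟩
  ext y
  constructor
  · intro hy
    exact hmem y hy
  · rintro ⟨h1, h2⟩
    obtain ⟨a, haJ, ha⟩ := exists_lt_of_csInf_lt ⟨y₀, hy₀⟩ h1
    obtain ⟨b, hbJ, hb⟩ := exists_lt_of_lt_csSup ⟨y₀, hy₀⟩ h2
    exact hJconv.ordConnected.out haJ hbJ ⟨ha.le, hb.le⟩

include hO hc in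
lemma einradius_eq (key : ∀ c ∈ Jset Ω', ∀ d ∈ Jset Ω', c < d →
      ENNReal.ofReal ((d - c)/2) ≤ einradius Ω')
    (hfin : einradius Ω' < ⊤) (hne : Ω'.Nonempty) :
    einradius Ω' = ENNReal.ofReal ((sSup (Jset Ω') - sInf (Jset Ω'))/2) := by
  obtain ⟨hlt, hIoo⟩ := Jset_eq_Ioo hO hc key hfin hne
  set α := sInf (Jset Ω') with hα
  set β := sSup (Jset Ω') with hβ
  have le1 : einradius Ω' ≤ ENNReal.ofReal ((β - α)/2) := by
    apply einradius_le_slab hlt.le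
    intro p hp
    rw [← hIoo]
    exact ⟨p 0, by rwa [mkpt_eta]⟩
  have ge1 : ENNReal.ofReal ((β - α)/2) ≤ einradius Ω' := by
    by_contra hcon
    push_neg at hcon
    have hne' : einradius Ω' ≠ ⊤ := hfin.ne
    have hRlt : (einradius Ω').toReal < (β - α)/2 := by
      rw [← ENNReal.toReal_ofReal (by linarith : (0:ℝ) ≤ (β - α)/2)]
      exact ENNReal.toReal_strict_mono (ENNReal.ofReal_ne_top) hcon
    set R := (einradius Ω').toReal with hR
    have hR0 : 0 ≤ R := ENNReal.toReal_nonneg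
    set ε := ((β - α)/2 - R)/2 with hεd
    have hε : 0 < ε := by rw [hεd]; linarith
    have hεsmall : ε < (β - α)/2 := by rw [hεd]; linarith
    have hcJ : α + ε ∈ Jset Ω' := by
      rw [hIoo]; constructor <;> [linarith; linarith]
    have hdJ : β - ε ∈ Jset Ω' := by
      rw [hIoo]; constructor <;> [linarith; linarith]
    have hcd : α + ε < β - ε := by linarith
    have hk := key _ hcJ _ hdJ hcd
    have : (β - ε - (α + ε))/2 ≤ R := by
      rw [hR]
      have := ENNReal.toReal_mono hne' hk
      rwa [ENNReal.toReal_ofReal (by linarith)] at this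
    linarith
  exact le_antisymm le1 ge1

include hO hc hrec in
lemma line_contra (hfin : einradius Ω' < ⊤) (hHR : highRidge Ω' = ∅)
    {ys : ℝ} (hline : ∀ x : ℝ, mkpt x ys ∈ Ω') : False := by
  have hdown : ∀ p ∈ Ω', ∀ t : ℝ, 0 ≤ t → p + t • (-(mkpt 1 0)) ∈ Ω' := by
    apply recession_of_closure hO hc (x₀ := mkpt 0 ys)
    intro t ht
    apply subset_closure
    have heq : mkpt 0 ys + t • (-(mkpt 1 0)) = mkpt (-t) ys := by
      ext i; fin_cases i <;> simp [mkpt]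
    rw [heq]; exact hline _
  have hstrip : Ω' = {p : E2 | p 1 ∈ Jset Ω'} := by
    ext p; constructor
    · intro hp; exact ⟨p 0, by rwa [mkpt_eta]⟩
    · rintro ⟨x, hx⟩
      rcases le_total x (p 0) with h | h
      · have := slice_up hrec hx h
        rwa [mkpt_eta] at this
      · have h2 := hdown _ hx (x - p 0) (by linarith)
        have heq : mkpt x (p 1) + (x - p 0) • (-(mkpt 1 0)) = mkpt (p 0) (p 1) := by
          ext i; fin_cases i <;> simp [mkpt] <;> ring
        rw [heq, mkpt_eta] at h2
        exact h2
  have hne : Ω'.Nonempty := ⟨mkpt 0 ys, hline 0⟩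
  have key : ∀ c ∈ Jset Ω', ∀ d ∈ Jset Ω', c < d →
      ENNReal.ofReal ((d - c)/2) ≤ einradius Ω' := by
    intro c hcJ d hdJ hcd
    have hrect : ∀ p : E2, (0:ℝ) < p 0 → p 1 ∈ Ioo c d → p ∈ Ω' := by
      intro p _ hp1
      rw [hstrip]
      exact (Jset_convex hc).ordConnected.out hcJ hdJ ⟨hp1.1.le, hp1.2.le⟩
    obtain ⟨x, hx, hball⟩ := rect_ball (Ω' := Ω') hcd hrect
    exact ofReal_le_einradius hx hball
  obtain ⟨hlt, hIoo⟩ := Jset_eq_Ioo hO hc key hfin hne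
  have hrad := einradius_eq hO hc key hfin hne
  set α := sInf (Jset Ω') with hα
  set β := sSup (Jset Ω') with hβ
  have hinr : inradius Ω' = (β - α)/2 := by
    unfold inradius
    rw [hrad, ENNReal.toReal_ofReal (by linarith)]
  have hcenter : mkpt 0 ((α+β)/2) ∈ Ω' := by
    rw [hstrip]
    show (mkpt 0 ((α+β)/2)) 1 ∈ Jset Ω'
    rw [mkpt_one, hIoo]
    constructor <;> [skip; skip] <;> linarith
  have hballs : Metric.ball (mkpt 0 ((α+β)/2)) (inradius Ω') ⊆ Ω' := by
    intro p hp
    rw [Metric.mem_ball, hinr] at hp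
    have h1 := dist_coord_le p (mkpt 0 ((α+β)/2)) 1
    rw [mkpt_one] at h1
    have habs := lt_of_le_of_lt h1 hp
    rw [abs_lt] at habs
    rw [hstrip]
    show p 1 ∈ Jset Ω'
    rw [hIoo]
    constructor <;> [skip; skip] <;> linarith [habs.1, habs.2]
  have hmem : mkpt 0 ((α+β)/2) ∈ highRidge Ω' := ⟨hcenter, hballs⟩
  rw [hHR] at hmem
  exact hmem

include hO hc hrec hnoline in
lemma not_bddAbove_F (hfin : einradius Ω' < ⊤) (hne : Ω'.Nonempty)
    (hHR : highRidge Ω' = ∅) : ¬ BddAbove (Ffun Ω' '' Jset Ω') := by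
  intro hbdd
  obtain ⟨B, hB⟩ := hbdd
  have key : ∀ c ∈ Jset Ω', ∀ d ∈ Jset Ω', c < d →
      ENNReal.ofReal ((d - c)/2) ≤ einradius Ω' := fun c hc' d hd' hcd' =>
    key_lower hO hc hrec hnoline hc' hd' hcd'
  obtain ⟨hlt, hIoo⟩ := Jset_eq_Ioo hO hc key hfin hne
  have hrad := einradius_eq hO hc key hfin hne
  set α := sInf (Jset Ω') with hα
  set β := sSup (Jset Ω') with hβ
  have hinr : inradius Ω' = (β - α)/2 := by
    unfold inradius
    rw [hrad, ENNReal.toReal_ofReal (by linarith)]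
  have hmidJ : (α+β)/2 ∈ Jset Ω' := by
    rw [hIoo]; exact ⟨by linarith, by linarith⟩
  have hFB : ∀ y ∈ Jset Ω', Ffun Ω' y ≤ B := fun y hy => hB ⟨y, hy, rfl⟩
  set c : E2 := mkpt (B + (β - α)/2) ((α+β)/2) with hcdef
  have hcmem : c ∈ Ω' := by
    apply mem_of_lt hO hrec hnoline
    · rw [show c 1 = (α+β)/2 by simp [hcdef]]; exact hmidJ
    · rw [show c 1 = (α+β)/2 by simp [hcdef], show c 0 = B + (β - α)/2 by simp [hcdef]]
      have := hFB _ hmidJ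
      linarith
  have hballs : Metric.ball c (inradius Ω') ⊆ Ω' := by
    intro p hp
    rw [Metric.mem_ball, hinr] at hp
    have h1 := dist_coord_le p c 1
    have h0 := dist_coord_le p c 0
    rw [show c 1 = (α+β)/2 by simp [hcdef]] at h1
    rw [show c 0 = B + (β - α)/2 by simp [hcdef]] at h0
    have habs1 := lt_of_le_of_lt h1 hp
    have habs0 := lt_of_le_of_lt h0 hp
    rw [abs_lt] at habs1 habs0
    have hp1J : p 1 ∈ Jset Ω' := by
      rw [hIoo]; exact ⟨by linarith [habs1.1], by linarith [habs1.2]⟩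
    apply mem_of_lt hO hrec hnoline hp1J
    have := hFB _ hp1J
    linarith [habs0.1]
  have hmem : c ∈ highRidge Ω' := ⟨hcmem, hballs⟩
  rw [hHR] at hmem
  exact hmem

end Main

lemma convex_blowup {r : ℝ} (hr : 0 < r) {F : ℝ → ℝ} (hF : ConvexOn ℝ (Ioo (-r) r) F)
    (hub : ¬ BddAbove (F '' Ioo (-r) r)) :
    Tendsto F (nhdsWithin (-r) (Ioi (-r))) atTop ∨
      Tendsto F (nhdsWithin r (Iio r)) atTop := by
  have h0mem : (0:ℝ) ∈ Ioo (-r) r := ⟨by linarith, hr⟩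
  have hcover : ¬ BddAbove (F '' Ioc (-r) 0) ∨ ¬ BddAbove (F '' Ico 0 r) := by
    by_contra h
    push_neg at h
    apply hub
    have hsub : F '' Ioo (-r) r ⊆ F '' Ioc (-r) 0 ∪ F '' Ico 0 r := by
      rintro _ ⟨y, hy, rfl⟩
      rcases le_total y 0 with h' | h'
      · exact Or.inl ⟨y, ⟨hy.1, h'⟩, rfl⟩
      · exact Or.inr ⟨y, ⟨h', hy.2⟩, rfl⟩
    exact (h.1.union h.2).mono hsub
  rcases hcover with hside | hside
  · left
    rw [tendsto_atTop]
    intro M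
    rw [not_bddAbove_iff] at hside
    obtain ⟨z, ⟨y₁, hy₁, rfl⟩, hz⟩ := hside (max M (F 0))
    have hy₁0 : y₁ < 0 := by
      rcases lt_or_eq_of_le hy₁.2 with h | h
      · exact h
      · exfalso
        rw [h] at hz
        exact absurd hz (not_lt.2 (le_max_right M (F 0)))
    filter_upwards [Ioo_mem_nhdsGT_of_mem (⟨le_refl _, hy₁.1⟩ : -r ∈ Ico (-r) y₁)] with y hy
    have hy0 : y < 0 := lt_trans hy.2 hy₁0
    set t := y₁ / y with ht
    have htpos : 0 < t := div_pos_of_neg_of_neg hy₁0 hy0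
    have htlt : t < 1 := by
      rw [ht, div_lt_one_of_neg hy0]
      exact hy.2
    have hty : t * y = y₁ := div_mul_cancel₀ _ (ne_of_lt hy0)
    have hyIoo : y ∈ Ioo (-r) r := ⟨hy.1, by linarith⟩
    have hcx := hF.2 h0mem hyIoo (by linarith : (0:ℝ) ≤ 1 - t) htpos.le (by ring)
    have hpt : (1 - t) • (0:ℝ) + t • y = y₁ := by simp [smul_eq_mul, hty]
    rw [hpt] at hcx
    simp only [smul_eq_mul] at hcx
    have hF0le : F 0 ≤ F y₁ := le_trans (le_max_right M (F 0)) hz.le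
    have hFy : F y₁ ≤ F y := by nlinarith [mul_le_mul_of_nonneg_left hF0le (by linarith : (0:ℝ) ≤ 1 - t)]
    have := le_max_left M (F 0)
    linarith
  · right
    rw [tendsto_atTop]
    intro M
    rw [not_bddAbove_iff] at hside
    obtain ⟨z, ⟨y₁, hy₁, rfl⟩, hz⟩ := hside (max M (F 0))
    have hy₁0 : 0 < y₁ := by
      rcases lt_or_eq_of_le hy₁.1 with h | h
      · exact h
      · exfalso
        rw [← h] at hz
        exact absurd hz (not_lt.2 (le_max_right M (F 0)))
    filter_upwards [Ioo_mem_nhdsLT_of_mem (⟨hy₁.2, le_refl _⟩ : r ∈ Ioc y₁ r)] with y hy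
    have hy0 : 0 < y := lt_trans hy₁0 hy.1
    set t := y₁ / y with ht
    have htpos : 0 < t := div_pos hy₁0 hy0
    have htlt : t < 1 := by
      rw [ht, div_lt_one hy0]
      exact hy.1
    have hty : t * y = y₁ := div_mul_cancel₀ _ (ne_of_gt hy0)
    have hyIoo : y ∈ Ioo (-r) r := ⟨by linarith, hy.2⟩
    have hcx := hF.2 h0mem hyIoo (by linarith : (0:ℝ) ≤ 1 - t) htpos.le (by ring)
    have hpt : (1 - t) • (0:ℝ) + t • y = y₁ := by simp [smul_eq_mul, hty]
    rw [hpt] at hcx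
    simp only [smul_eq_mul] at hcx
    have hF0le : F 0 ≤ F y₁ := le_trans (le_max_right M (F 0)) hz.le
    have hFy : F y₁ ≤ F y := by nlinarith [mul_le_mul_of_nonneg_left hF0le (by linarith : (0:ℝ) ≤ 1 - t)]
    have := le_max_left M (F 0)
    linarith

end S15

open S15 in
/-- an unbounded open convex set `Ω ⊆ ℝ²` with finite inradius and empty
high ridge set is, up to a rigid motion, the epigraph
`{(x₁,x₂) : -r_Ω < x₂ < r_Ω, x₁ > f(x₂)}` of a convex function
`f : (-r_Ω, r_Ω) → ℝ` blowing up to `+∞` at (at least) one endpoint. -/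
theorem statement_15 (Ω : Set (EuclideanSpace ℝ (Fin 2)))
    (hΩ : IsOpen Ω) (hconv : Convex ℝ Ω) (hunb : ¬ Bornology.IsBounded Ω)
    (hfin : einradius Ω < ⊤) (hM : highRidge Ω = ∅) :
    ∃ f : ℝ → ℝ, ConvexOn ℝ (Set.Ioo (-(inradius Ω)) (inradius Ω)) f ∧
      (Filter.Tendsto f (nhdsWithin (-(inradius Ω)) (Set.Ioi (-(inradius Ω)))) Filter.atTop ∨
        Filter.Tendsto f (nhdsWithin (inradius Ω) (Set.Iio (inradius Ω))) Filter.atTop) ∧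
      ∃ g : EuclideanSpace ℝ (Fin 2) ≃ᵃⁱ[ℝ] EuclideanSpace ℝ (Fin 2),
        g '' Ω = {p : EuclideanSpace ℝ (Fin 2) |
          p 1 ∈ Set.Ioo (-(inradius Ω)) (inradius Ω) ∧ f (p 1) < p 0} := by
  classical
  have hne : Ω.Nonempty := by
    rcases Set.eq_empty_or_nonempty Ω with h | h
    · exact absurd (h ▸ Bornology.isBounded_empty) hunb
    · exact h
  obtain ⟨v, hv, hvrec⟩ := recession_exists hΩ hconv hunb hne
  obtain ⟨Lr, hLr⟩ := exists_rot v hv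
  set g₁ : E2 ≃ᵃⁱ[ℝ] E2 := Lr.toAffineIsometryEquiv with hg₁
  have hg₁coe : ⇑g₁ = ⇑Lr := Lr.coe_toAffineIsometryEquiv
  set Ω₁ := g₁ '' Ω with hΩ₁def
  have hO₁ : IsOpen Ω₁ := by
    rw [hΩ₁def, ← g₁.coe_toHomeomorph]
    exact g₁.toHomeomorph.isOpen_image.2 hΩ
  have hc₁ : Convex ℝ Ω₁ := by
    have hcoe : ⇑(g₁.toAffineEquiv.toAffineMap) = ⇑g₁ := by
      ext x; simp
    rw [hΩ₁def, ← hcoe]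
    exact hconv.affine_image _
  have hrec₁ : ∀ p ∈ Ω₁, ∀ t : ℝ, 0 ≤ t → p + t • mkpt 1 0 ∈ Ω₁ := by
    rintro p ⟨x, hx, rfl⟩ t ht
    refine ⟨x + t • v, hvrec x hx t ht, ?_⟩
    simp only [hg₁coe]
    rw [map_add, _root_.map_smul, hLr]
  have hfin₁ : einradius Ω₁ < ⊤ := by
    rw [hΩ₁def, einradius_image]; exact hfin
  have hHR₁ : highRidge Ω₁ = ∅ := by
    rw [hΩ₁def, highRidge_image, hM, Set.image_empty]
  by_cases hlineq : ∃ ys : ℝ, ∀ x : ℝ, mkpt x ys ∈ Ω₁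
  · obtain ⟨ys, hys⟩ := hlineq
    exact (line_contra hO₁ hc₁ hrec₁ hfin₁ hHR₁ hys).elim
  push_neg at hlineq
  have hnoline₁ : ∀ y : ℝ, ∃ x : ℝ, mkpt x y ∉ Ω₁ := hlineq
  have hne₁ : Ω₁.Nonempty := hne.image _
  have key₁ : ∀ c ∈ Jset Ω₁, ∀ d ∈ Jset Ω₁, c < d →
      ENNReal.ofReal ((d - c)/2) ≤ einradius Ω₁ := fun c hc' d hd' hcd' =>
    key_lower hO₁ hc₁ hrec₁ hnoline₁ hc' hd' hcd'
  obtain ⟨hlt₁, hIoo₁⟩ := Jset_eq_Ioo hO₁ hc₁ key₁ hfin₁ hne₁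
  set α := sInf (Jset Ω₁) with hα
  set β := sSup (Jset Ω₁) with hβ
  set m := (α + β)/2 with hm
  set w : E2 := mkpt 0 (-m) with hw
  set g : E2 ≃ᵃⁱ[ℝ] E2 := g₁.trans (AffineIsometryEquiv.constVAdd ℝ E2 w) with hg
  have hgx : ∀ x, g x = w + g₁ x := fun x => rfl
  set Ω₂ := g '' Ω with hΩ₂def
  have hΩ₂eq : Ω₂ = (fun p => w + p) '' Ω₁ := by
    rw [hΩ₂def, hΩ₁def, Set.image_image]
    apply Set.image_congr
    intro x _
    exact hgx x
  have hmem₂ : ∀ p : E2, p ∈ Ω₂ ↔ mkpt (p 0) (p 1 + m) ∈ Ω₁ := by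
    intro p
    have hsub : p - w = mkpt (p 0) (p 1 + m) := by
      ext i; fin_cases i <;> simp [hw, mkpt, PiLp.sub_apply] <;> ring
    rw [hΩ₂eq]
    constructor
    · rintro ⟨q, hq, rfl⟩
      have : w + q - w = q := by module
      rwa [← hsub, this]
    · intro h
      exact ⟨p - w, by rwa [hsub], by module⟩
  have hO₂ : IsOpen Ω₂ := by
    rw [hΩ₂def, ← g.coe_toHomeomorph]
    exact g.toHomeomorph.isOpen_image.2 hΩ
  have hc₂ : Convex ℝ Ω₂ := by
    have hcoe : ⇑(g.toAffineEquiv.toAffineMap) = ⇑g := by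
      ext x; simp
    rw [hΩ₂def, ← hcoe]
    exact hconv.affine_image _
  have hrec₂ : ∀ p ∈ Ω₂, ∀ t : ℝ, 0 ≤ t → p + t • mkpt 1 0 ∈ Ω₂ := by
    intro p hp t ht
    rw [hmem₂] at hp ⊢
    have h0 : (p + t • mkpt 1 0) 0 = p 0 + t := by
      simp [PiLp.add_apply, PiLp.smul_apply]
    have h1 : (p + t • mkpt 1 0) 1 = p 1 := by
      simp [PiLp.add_apply, PiLp.smul_apply]
    rw [h0, h1, ← mkpt_add_smul]
    exact hrec₁ _ hp t ht
  have hnoline₂ : ∀ y : ℝ, ∃ x : ℝ, mkpt x y ∉ Ω₂ := by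
    intro y
    obtain ⟨x, hx⟩ := hnoline₁ (y + m)
    refine ⟨x, ?_⟩
    rw [hmem₂, mkpt_zero, mkpt_one]
    exact hx
  have hfin₂ : einradius Ω₂ < ⊤ := by
    rw [hΩ₂def, einradius_image]; exact hfin
  have hHR₂ : highRidge Ω₂ = ∅ := by
    rw [hΩ₂def, highRidge_image, hM, Set.image_empty]
  have hne₂ : Ω₂.Nonempty := hne.image _
  -- J of Ω₂
  have hJ₂ : Jset Ω₂ = Set.Ioo (α - m) (β - m) := by
    ext y
    constructor
    · rintro ⟨x, hx⟩
      rw [hmem₂, mkpt_zero, mkpt_one] at hx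
      have : y + m ∈ Jset Ω₁ := ⟨x, hx⟩
      rw [hIoo₁] at this
      exact ⟨by linarith [this.1], by linarith [this.2]⟩
    · rintro ⟨h1, h2⟩
      have : y + m ∈ Jset Ω₁ := by
        rw [hIoo₁]
        exact ⟨by linarith, by linarith⟩
      obtain ⟨x, hx⟩ := this
      refine ⟨x, ?_⟩
      rw [hmem₂, mkpt_zero, mkpt_one]
      exact hx
  have key₂ : ∀ c ∈ Jset Ω₂, ∀ d ∈ Jset Ω₂, c < d →
      ENNReal.ofReal ((d - c)/2) ≤ einradius Ω₂ := fun c hc' d hd' hcd' =>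
    key_lower hO₂ hc₂ hrec₂ hnoline₂ hc' hd' hcd'
  have hrad₂ := einradius_eq hO₂ hc₂ key₂ hfin₂ hne₂
  have hsInf₂ : sInf (Jset Ω₂) = α - m := by rw [hJ₂]; exact csInf_Ioo (by linarith)
  have hsSup₂ : sSup (Jset Ω₂) = β - m := by rw [hJ₂]; exact csSup_Ioo (by linarith)
  have hEr : einradius Ω = ENNReal.ofReal ((β - α)/2) := by
    rw [show einradius Ω = einradius Ω₂ by rw [hΩ₂def, einradius_image]]
    rw [hrad₂, hsInf₂, hsSup₂]
    congr 1
    ring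
  have hrval : inradius Ω = (β - α)/2 := by
    unfold inradius
    rw [hEr, ENNReal.toReal_ofReal (by linarith)]
  have hrpos : 0 < inradius Ω := by rw [hrval]; linarith
  have hend1 : α - m = -(inradius Ω) := by rw [hrval, hm]; ring
  have hend2 : β - m = inradius Ω := by rw [hrval, hm]; ring
  have hJ₂' : Jset Ω₂ = Set.Ioo (-(inradius Ω)) (inradius Ω) := by
    rw [hJ₂, hend1, hend2]
  refine ⟨Ffun Ω₂, ?_, ?_, g, ?_⟩
  · have := Ffun_convexOn hc₂ hrec₂ hnoline₂
    rwa [hJ₂'] at this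
  · have hub := not_bddAbove_F hO₂ hc₂ hrec₂ hnoline₂ hfin₂ hne₂ hHR₂
    rw [hJ₂'] at hub
    exact convex_blowup hrpos (by rw [← hJ₂']; exact Ffun_convexOn hc₂ hrec₂ hnoline₂) hub
  · have := omega_eq hO₂ hrec₂ hnoline₂
    rw [hΩ₂def] at this
    rw [this, hJ₂']

end
end
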